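/- S-fraction for set partitions: for each n ≥ 0 let B_n(x,y,v) = ∑_{π∈Π_n} x^{|π|} y^{erec(π)} v^{n−|π|−erec(π)} (the exponent n−|π|−erec(π) is nonnegative for every π). Then ∑_{n≥0} B_n(x,y,v) t^n is given by the S-type continued fraction with coefficients α_{2k−1} = x and α_{2k} = y+(k−1)v for k ≥ 1. -/

import Mathlib

namespace Paper

/-! ### Motzkin paths, Dyck paths, and Flajolet's continued-fraction weights -/

inductive MStep : Type
  | up : MStep
  | down : MStep
  | flat : MStep
  deriving DecidableEq

instance : Fintype MStep :=
  ⟨{MStep.up, MStep.down, MStep.flat}, fun x => by cases x <;> simp⟩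

noncomputable section

/-- Height increment of a single step. -/
def MStep.val : MStep → ℤ
  | .up => 1
  | .down => -1
  | .flat => 0

/-- The height of the lattice path `ω` after its first `i` steps. -/
def height {n : ℕ} (ω : Fin n → MStep) (i : ℕ) : ℤ :=
  ∑ j ∈ Finset.univ.filter (fun j : Fin n => (j : ℕ) < i), (ω j).val

open Classical in
/-- Motzkin paths of length `n`: lattice paths from `(0,0)` to `(n,0)` with steps
`(1,1)`, `(1,-1)` and `(1,0)`, staying at heights `≥ 0`. -/
def motzkinPaths (n : ℕ) : Finset (Fin n → MStep) :=
  Finset.univ.filter fun ω =>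
    (∀ i ∈ Finset.range (n + 1), 0 ≤ height ω i) ∧ height ω n = 0

/-- Dyck paths of length `n`: Motzkin paths having no level step. -/
def dyckPaths (n : ℕ) : Finset (Fin n → MStep) :=
  (motzkinPaths n).filter fun ω => ∀ i, ω i ≠ MStep.flat

/-- The weight of a Motzkin path for the J-type continued fraction with coefficients
`γ` (one factor `γ h` for each level step at height `h`) and `β` (one factor `β h`
for each fall starting at height `h`); rises have weight `1`. -/
def jweight {R : Type*} [CommRing R] {n : ℕ} (γ β : ℕ → R) (ω : Fin n → MStep) : R :=
  ∏ i : Fin n,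
    match ω i with
    | MStep.up => (1 : R)
    | MStep.down => β (height ω (i : ℕ)).toNat
    | MStep.flat => γ (height ω (i : ℕ)).toNat

/-- The weight of a Dyck path for the S-type continued fraction with coefficients `α`
(one factor `α h` for each fall starting at height `h`); rises have weight `1`. -/
def sweight {R : Type*} [CommRing R] {n : ℕ} (α : ℕ → R) (ω : Fin n → MStep) : R :=
  ∏ i : Fin n,
    match ω i with
    | MStep.up => (1 : R)
    | MStep.down => α (height ω (i : ℕ)).toNat
    | MStep.flat => (0 : R)

/-- The `(p,q)`-integer `[m]_{p,q} = ∑_{j=0}^{m-1} p^j q^(m-1-j)`. -/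
def qint {R : Type*} [CommRing R] (p q : R) (m : ℕ) : R :=
  ∑ j ∈ Finset.range m, p ^ j * q ^ (m - 1 - j)

/-- `starSum f m = ∑_{ℓ=0}^{m} f ℓ (m-ℓ)`. -/
def starSum {R : Type*} [CommRing R] (f : ℕ → ℕ → R) (m : ℕ) : R :=
  ∑ ℓ ∈ Finset.range (m + 1), f ℓ (m - ℓ)

/-- `rowSum f m = ∑_{ℓ=0}^{m} f m ℓ`. -/
def rowSum {R : Type*} [CommRing R] (f : ℕ → ℕ → R) (m : ℕ) : R :=
  ∑ ℓ ∈ Finset.range (m + 1), f m ℓ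

/-! ### Generic counting helpers -/

/-- The number of indices `i : Fin n` satisfying `P i`. -/
def cnt {n : ℕ} (P : Fin n → Prop) : ℕ := Nat.card {i : Fin n // P i}

/-- The number of quadruplets `i < j < k < l` satisfying `C i j k l`. -/
def quad {n : ℕ} (C : Fin n → Fin n → Fin n → Fin n → Prop) : ℕ :=
  Nat.card {q : Fin n × Fin n × Fin n × Fin n //
    q.1 < q.2.1 ∧ q.2.1 < q.2.2.1 ∧ q.2.2.1 < q.2.2.2 ∧ C q.1 q.2.1 q.2.2.1 q.2.2.2}

/-- The number of triplets `i < j < l` satisfying `C i j l`. -/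
def trip {n : ℕ} (C : Fin n → Fin n → Fin n → Prop) : ℕ :=
  Nat.card {q : Fin n × Fin n × Fin n // q.1 < q.2.1 ∧ q.2.1 < q.2.2 ∧ C q.1 q.2.1 q.2.2}

/-! ### Permutation statistics -/

variable {n : ℕ}

/-- `i` is a record of `σ`. -/
def isRec (σ : Equiv.Perm (Fin n)) (i : Fin n) : Prop := ∀ j, j < i → σ j < σ i

/-- `i` is an antirecord of `σ`. -/
def isArec (σ : Equiv.Perm (Fin n)) (i : Fin n) : Prop := ∀ j, i < j → σ i < σ j

/-- `i` is an exclusive record of `σ`. -/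
def isERec (σ : Equiv.Perm (Fin n)) (i : Fin n) : Prop := isRec σ i ∧ ¬ isArec σ i

/-- `i` is an exclusive antirecord of `σ`. -/
def isEArec (σ : Equiv.Perm (Fin n)) (i : Fin n) : Prop := isArec σ i ∧ ¬ isRec σ i

/-- `i` is a neither-record-antirecord of `σ`. -/
def isNrar (σ : Equiv.Perm (Fin n)) (i : Fin n) : Prop := ¬ isRec σ i ∧ ¬ isArec σ i

/-- `i` is a cycle valley of `σ`. -/
def isCval (σ : Equiv.Perm (Fin n)) (i : Fin n) : Prop := i < σ i ∧ i < σ⁻¹ i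

/-- `i` is a cycle peak of `σ`. -/
def isCpeak (σ : Equiv.Perm (Fin n)) (i : Fin n) : Prop := σ i < i ∧ σ⁻¹ i < i

/-- `i` is a cycle double rise of `σ`. -/
def isCdrise (σ : Equiv.Perm (Fin n)) (i : Fin n) : Prop := σ⁻¹ i < i ∧ i < σ i

/-- `i` is a cycle double fall of `σ`. -/
def isCdfall (σ : Equiv.Perm (Fin n)) (i : Fin n) : Prop := σ i < i ∧ i < σ⁻¹ i

/-- `i` is a fixed point of `σ`. -/
def isFix (σ : Equiv.Perm (Fin n)) (i : Fin n) : Prop := σ i = i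

instance (σ : Equiv.Perm (Fin n)) : DecidablePred (isCval σ) := fun i =>
  inferInstanceAs (Decidable (i < σ i ∧ i < σ⁻¹ i))

instance (σ : Equiv.Perm (Fin n)) : DecidablePred (isCpeak σ) := fun i =>
  inferInstanceAs (Decidable (σ i < i ∧ σ⁻¹ i < i))

instance (σ : Equiv.Perm (Fin n)) : DecidablePred (isCdrise σ) := fun i =>
  inferInstanceAs (Decidable (σ⁻¹ i < i ∧ i < σ i))

instance (σ : Equiv.Perm (Fin n)) : DecidablePred (isCdfall σ) := fun i =>
  inferInstanceAs (Decidable (σ i < i ∧ i < σ⁻¹ i))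

instance (σ : Equiv.Perm (Fin n)) : DecidablePred (isFix σ) := fun i =>
  inferInstanceAs (Decidable (σ i = i))

/-- The number of excedances of `σ`. -/
def exc (σ : Equiv.Perm (Fin n)) : ℕ := cnt fun i => i < σ i

/-- The number of antirecords of `σ`. -/
def arec (σ : Equiv.Perm (Fin n)) : ℕ := cnt (isArec σ)

/-- The number of exclusive records of `σ`. -/
def erec (σ : Equiv.Perm (Fin n)) : ℕ := cnt (isERec σ)

/-- The number of inversions of `σ`. -/
def inversions (σ : Equiv.Perm (Fin n)) : ℕ :=
  Nat.card {p : Fin n × Fin n // p.1 < p.2 ∧ σ p.2 < σ p.1}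

/-- The number of cycles of `σ` (fixed points included). -/
def cyc (σ : Equiv.Perm (Fin n)) : ℕ := σ.cycleType.card + cnt (isFix σ)

/-- The level of an index `i`: `#{j < i : σ j > i}`. -/
def levAt (σ : Equiv.Perm (Fin n)) (i : Fin n) : ℕ := cnt fun j => j < i ∧ i < σ j

def eareccpeak (σ : Equiv.Perm (Fin n)) : ℕ := cnt fun i => isEArec σ i ∧ isCpeak σ i
def eareccdfall (σ : Equiv.Perm (Fin n)) : ℕ := cnt fun i => isEArec σ i ∧ isCdfall σ i
def ereccval (σ : Equiv.Perm (Fin n)) : ℕ := cnt fun i => isERec σ i ∧ isCval σ i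
def ereccdrise (σ : Equiv.Perm (Fin n)) : ℕ := cnt fun i => isERec σ i ∧ isCdrise σ i
def nrcpeak (σ : Equiv.Perm (Fin n)) : ℕ := cnt fun i => isNrar σ i ∧ isCpeak σ i
def nrcdfall (σ : Equiv.Perm (Fin n)) : ℕ := cnt fun i => isNrar σ i ∧ isCdfall σ i
def nrcval (σ : Equiv.Perm (Fin n)) : ℕ := cnt fun i => isNrar σ i ∧ isCval σ i
def nrcdrise (σ : Equiv.Perm (Fin n)) : ℕ := cnt fun i => isNrar σ i ∧ isCdrise σ i

/-- The number of upper crossings of `σ`. -/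
def ucross (σ : Equiv.Perm (Fin n)) : ℕ := quad fun i j k l => σ i = k ∧ σ j = l
/-- The number of lower crossings of `σ`. -/
def lcross (σ : Equiv.Perm (Fin n)) : ℕ := quad fun i j k l => σ k = i ∧ σ l = j
/-- The number of upper nestings of `σ`. -/
def unest (σ : Equiv.Perm (Fin n)) : ℕ := quad fun i j k l => σ i = l ∧ σ j = k
/-- The number of lower nestings of `σ`. -/
def lnest (σ : Equiv.Perm (Fin n)) : ℕ := quad fun i j k l => σ l = i ∧ σ k = j
/-- The number of upper joinings of `σ`. -/
def ujoin (σ : Equiv.Perm (Fin n)) : ℕ := trip fun i j l => σ i = j ∧ σ j = l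
/-- The number of lower joinings of `σ`. -/
def ljoin (σ : Equiv.Perm (Fin n)) : ℕ := trip fun i j l => σ j = i ∧ σ l = j
/-- The number of upper pseudo-nestings of `σ`. -/
def upsnest (σ : Equiv.Perm (Fin n)) : ℕ := trip fun i j l => σ j = j ∧ σ i = l
/-- The number of lower pseudo-nestings of `σ`. -/
def lpsnest (σ : Equiv.Perm (Fin n)) : ℕ := trip fun i j l => σ j = j ∧ σ l = i
/-- `psnest = upsnest (= lpsnest)`. -/
def psnest (σ : Equiv.Perm (Fin n)) : ℕ := upsnest σ

def ucrosscval (σ : Equiv.Perm (Fin n)) : ℕ :=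
  quad fun i j k l => σ i = k ∧ σ j = l ∧ j < σ⁻¹ j
def ucrosscdrise (σ : Equiv.Perm (Fin n)) : ℕ :=
  quad fun i j k l => σ i = k ∧ σ j = l ∧ σ⁻¹ j < j
def lcrosscpeak (σ : Equiv.Perm (Fin n)) : ℕ :=
  quad fun i j k l => σ k = i ∧ σ l = j ∧ σ⁻¹ k < k
def lcrosscdfall (σ : Equiv.Perm (Fin n)) : ℕ :=
  quad fun i j k l => σ k = i ∧ σ l = j ∧ k < σ⁻¹ k
def unestcval (σ : Equiv.Perm (Fin n)) : ℕ :=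
  quad fun i j k l => σ i = l ∧ σ j = k ∧ j < σ⁻¹ j
def unestcdrise (σ : Equiv.Perm (Fin n)) : ℕ :=
  quad fun i j k l => σ i = l ∧ σ j = k ∧ σ⁻¹ j < j
def lnestcpeak (σ : Equiv.Perm (Fin n)) : ℕ :=
  quad fun i j k l => σ l = i ∧ σ k = j ∧ σ⁻¹ k < k
def lnestcdfall (σ : Equiv.Perm (Fin n)) : ℕ :=
  quad fun i j k l => σ l = i ∧ σ k = j ∧ k < σ⁻¹ k

/-- `ucross (j, σ) = #{i<j<k<l : k = σ i, l = σ j}`. -/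
def ucrossAt (σ : Equiv.Perm (Fin n)) (j : Fin n) : ℕ :=
  Nat.card {t : Fin n × Fin n × Fin n //
    t.1 < j ∧ j < t.2.1 ∧ t.2.1 < t.2.2 ∧ σ t.1 = t.2.1 ∧ σ j = t.2.2}

/-- `unest (j, σ) = #{i<j<k<l : k = σ j, l = σ i}`. -/
def unestAt (σ : Equiv.Perm (Fin n)) (j : Fin n) : ℕ :=
  Nat.card {t : Fin n × Fin n × Fin n //
    t.1 < j ∧ j < t.2.1 ∧ t.2.1 < t.2.2 ∧ σ j = t.2.1 ∧ σ t.1 = t.2.2}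

/-- `lcross (k, σ) = #{i<j<k<l : i = σ k, j = σ l}`. -/
def lcrossAt (σ : Equiv.Perm (Fin n)) (k : Fin n) : ℕ :=
  Nat.card {t : Fin n × Fin n × Fin n //
    t.1 < t.2.1 ∧ t.2.1 < k ∧ k < t.2.2 ∧ σ k = t.1 ∧ σ t.2.2 = t.2.1}

/-- `lnest (k, σ) = #{i<j<k<l : i = σ l, j = σ k}`. -/
def lnestAt (σ : Equiv.Perm (Fin n)) (k : Fin n) : ℕ :=
  Nat.card {t : Fin n × Fin n × Fin n //
    t.1 < t.2.1 ∧ t.2.1 < k ∧ k < t.2.2 ∧ σ t.2.2 = t.1 ∧ σ k = t.2.1}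

/-! ### Set-partition statistics -/

open Classical in
/-- The set partitions of `{1, …, n}`, encoded as the collections of their blocks. -/
def setPartitions (n : ℕ) : Finset (Finset (Finset (Fin n))) :=
  Finset.univ.filter fun P =>
    (∀ B ∈ P, B.Nonempty) ∧ (∀ i : Fin n, ∃ B ∈ P, i ∈ B) ∧
      ∀ B ∈ P, ∀ C ∈ P, ∀ i : Fin n, i ∈ B → i ∈ C → B = C

/-- `(i, j)` is an edge of the graph `G_P`: `i < j` are consecutive elements of a
common block of `P`. -/
def arc (P : Finset (Finset (Fin n))) (i j : Fin n) : Prop :=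
  i < j ∧ ∃ B ∈ P, i ∈ B ∧ j ∈ B ∧ ∀ k ∈ B, ¬(i < k ∧ k < j)

instance (P : Finset (Finset (Fin n))) (i j : Fin n) : Decidable (arc P i j) :=
  inferInstanceAs
    (Decidable (i < j ∧ ∃ B ∈ P, i ∈ B ∧ j ∈ B ∧ ∀ k ∈ B, ¬(i < k ∧ k < j)))

/-- `i` is an opener: the smallest element of a block of size `≥ 2`. -/
def isOpener (P : Finset (Finset (Fin n))) (i : Fin n) : Prop :=
  ∃ B ∈ P, i ∈ B ∧ 2 ≤ B.card ∧ ∀ j ∈ B, i ≤ j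

/-- `i` is a closer: the largest element of a block of size `≥ 2`. -/
def isCloser (P : Finset (Finset (Fin n))) (i : Fin n) : Prop :=
  ∃ B ∈ P, i ∈ B ∧ 2 ≤ B.card ∧ ∀ j ∈ B, j ≤ i

/-- `i` is an insider: a non-smallest, non-largest element of a block of size `≥ 3`. -/
def isInsider (P : Finset (Finset (Fin n))) (i : Fin n) : Prop :=
  ∃ B ∈ P, i ∈ B ∧ 3 ≤ B.card ∧ (∃ j ∈ B, j < i) ∧ ∃ j ∈ B, i < j

/-- `i` is a singleton of `P`. -/
def isSingle (P : Finset (Finset (Fin n))) (i : Fin n) : Prop := {i} ∈ P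

instance (P : Finset (Finset (Fin n))) : DecidablePred (isOpener P) := fun i =>
  inferInstanceAs (Decidable (∃ B ∈ P, i ∈ B ∧ 2 ≤ B.card ∧ ∀ j ∈ B, i ≤ j))

instance (P : Finset (Finset (Fin n))) : DecidablePred (isCloser P) := fun i =>
  inferInstanceAs (Decidable (∃ B ∈ P, i ∈ B ∧ 2 ≤ B.card ∧ ∀ j ∈ B, j ≤ i))

instance (P : Finset (Finset (Fin n))) : DecidablePred (isInsider P) := fun i =>
  inferInstanceAs
    (Decidable (∃ B ∈ P, i ∈ B ∧ 3 ≤ B.card ∧ (∃ j ∈ B, j < i) ∧ ∃ j ∈ B, i < j))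

instance (P : Finset (Finset (Fin n))) : DecidablePred (isSingle P) := fun i =>
  inferInstanceAs (Decidable ({i} ∈ P))

/-- `i` is an exclusive record of the set partition `P`: `i` has a next-larger
element `l` in its block, and for every `j < i` the next-larger element of `j` in its
block (when it exists) is smaller than `l`. -/
def isERecP (P : Finset (Finset (Fin n))) (i : Fin n) : Prop :=
  ∃ l, arc P i l ∧ ∀ j, j < i → ∀ m, arc P j m → m < l

/-- The number of exclusive records of `P`. -/
def perecP (P : Finset (Finset (Fin n))) : ℕ := cnt (isERecP P)

/-- The number of singletons of `P`. -/
def singCount (P : Finset (Finset (Fin n))) : ℕ := cnt (isSingle P)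

/-- The number of blocks of `P` of size `≥ 2`. -/
def blkCount (P : Finset (Finset (Fin n))) : ℕ :=
  Nat.card {B : Finset (Fin n) // B ∈ P ∧ 2 ≤ B.card}

def erecinP (P : Finset (Finset (Fin n))) : ℕ := cnt fun i => isInsider P i ∧ isERecP P i
def erecopP (P : Finset (Finset (Fin n))) : ℕ := cnt fun i => isOpener P i ∧ isERecP P i
def nerecinP (P : Finset (Finset (Fin n))) : ℕ :=
  cnt fun i => isInsider P i ∧ ¬ isERecP P i
def nerecopP (P : Finset (Finset (Fin n))) : ℕ :=
  cnt fun i => isOpener P i ∧ ¬ isERecP P i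

/-- `cr (j, P) = #{i<j<k<l : (i,k) ∈ G_P and (j,l) ∈ G_P}`. -/
def crAt (P : Finset (Finset (Fin n))) (j : Fin n) : ℕ :=
  Nat.card {t : Fin n × Fin n × Fin n //
    t.1 < j ∧ j < t.2.1 ∧ t.2.1 < t.2.2 ∧ arc P t.1 t.2.1 ∧ arc P j t.2.2}

/-- `ne (j, P) = #{i<j<k<l : (i,l) ∈ G_P and (j,k) ∈ G_P}`. -/
def neAt (P : Finset (Finset (Fin n))) (j : Fin n) : ℕ :=
  Nat.card {t : Fin n × Fin n × Fin n //
    t.1 < j ∧ j < t.2.1 ∧ t.2.1 < t.2.2 ∧ arc P t.1 t.2.2 ∧ arc P j t.2.1}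

/-- `qne (j, P) = #{i<j<l : (i,l) ∈ G_P}`. -/
def qneAt (P : Finset (Finset (Fin n))) (j : Fin n) : ℕ :=
  Nat.card {p : Fin n × Fin n // p.1 < j ∧ j < p.2 ∧ arc P p.1 p.2}

/-- The total number of crossings of `P`. -/
def crP (P : Finset (Finset (Fin n))) : ℕ := quad fun i j k l => arc P i k ∧ arc P j l
/-- The number of crossings of `P` whose second index is an opener. -/
def cropP (P : Finset (Finset (Fin n))) : ℕ :=
  quad fun i j k l => arc P i k ∧ arc P j l ∧ isOpener P j
/-- The number of crossings of `P` whose second index is an insider. -/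
def crinP (P : Finset (Finset (Fin n))) : ℕ :=
  quad fun i j k l => arc P i k ∧ arc P j l ∧ isInsider P j
/-- The number of nestings of `P` whose second index is an opener. -/
def neopP (P : Finset (Finset (Fin n))) : ℕ :=
  quad fun i j k l => arc P i l ∧ arc P j k ∧ isOpener P j
/-- The number of nestings of `P` whose second index is an insider. -/
def neinP (P : Finset (Finset (Fin n))) : ℕ :=
  quad fun i j k l => arc P i l ∧ arc P j k ∧ isInsider P j
/-- The number of pseudo-nestings of `P`. -/
def psneP (P : Finset (Finset (Fin n))) : ℕ :=
  trip fun i j l => isSingle P j ∧ arc P i l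

/-- The smallest element of a block, as a natural number. -/
def bmin (B : Finset (Fin n)) : ℕ := sInf {m : ℕ | ∃ i ∈ B, (i : ℕ) = m}

/-- The largest element of a block, as a natural number. -/
def bmax (B : Finset (Fin n)) : ℕ := B.sup fun i => (i : ℕ)

/-- `ov (j, P) = #{(B₁,B₂) : j ∈ B₂, min B₁ < j < max B₁ < max B₂}`. -/
def ovAt (P : Finset (Finset (Fin n))) (j : Fin n) : ℕ :=
  Nat.card {p : Finset (Fin n) × Finset (Fin n) // p.1 ∈ P ∧ p.2 ∈ P ∧ j ∈ p.2 ∧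
    bmin p.1 < (j : ℕ) ∧ (j : ℕ) < bmax p.1 ∧ bmax p.1 < bmax p.2}

/-- `cov (j, P) = #{(B₁,B₂) : j ∈ B₂, min B₁ < j < max B₂ < max B₁}`. -/
def covAt (P : Finset (Finset (Fin n))) (j : Fin n) : ℕ :=
  Nat.card {p : Finset (Fin n) × Finset (Fin n) // p.1 ∈ P ∧ p.2 ∈ P ∧ j ∈ p.2 ∧
    bmin p.1 < (j : ℕ) ∧ (j : ℕ) < bmax p.2 ∧ bmax p.2 < bmax p.1}

/-- The number of overlaps of `P`: pairs of blocks with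
`min B₁ < min B₂ < max B₁ < max B₂`. -/
def ovP (P : Finset (Finset (Fin n))) : ℕ :=
  Nat.card {p : Finset (Fin n) × Finset (Fin n) // p.1 ∈ P ∧ p.2 ∈ P ∧
    bmin p.1 < bmin p.2 ∧ bmin p.2 < bmax p.1 ∧ bmax p.1 < bmax p.2}

/-- The number of coverings of `P`: pairs of blocks with
`min B₁ < min B₂ < max B₂ < max B₁`. -/
def covP (P : Finset (Finset (Fin n))) : ℕ :=
  Nat.card {p : Finset (Fin n) × Finset (Fin n) // p.1 ∈ P ∧ p.2 ∈ P ∧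
    bmin p.1 < bmin p.2 ∧ bmin p.2 < bmax p.2 ∧ bmax p.2 < bmax p.1}

/-- The number of pseudo-coverings of `P`: pairs of blocks with
`min B₁ < min B₂ = max B₂ < max B₁`. -/
def pscovP (P : Finset (Finset (Fin n))) : ℕ :=
  Nat.card {p : Finset (Fin n) × Finset (Fin n) // p.1 ∈ P ∧ p.2 ∈ P ∧
    bmin p.1 < bmin p.2 ∧ bmin p.2 = bmax p.2 ∧ bmax p.2 < bmax p.1}

/-- `ovin P = ∑_{j insider} ov (j, P)`. -/
def ovinP (P : Finset (Finset (Fin n))) : ℕ :=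
  ∑ j ∈ Finset.univ.filter (isInsider P), ovAt P j

/-- `covin P = ∑_{j insider} cov (j, P)`. -/
def covinP (P : Finset (Finset (Fin n))) : ℕ :=
  ∑ j ∈ Finset.univ.filter (isInsider P), covAt P j

/-- The intertwining number of two (disjoint nonempty) blocks `B`, `C`: the number of
pairs `(b,c) ∈ B × C` with no element of `B ∪ C` strictly between `b` and `c`. -/
def iota (B C : Finset (Fin n)) : ℕ :=
  Nat.card {p : Fin n × Fin n // p.1 ∈ B ∧ p.2 ∈ C ∧
    ∀ k ∈ B ∪ C, ¬(min p.1 p.2 < k ∧ k < max p.1 p.2)}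

/-- The intertwining number of a set partition: the sum of `iota B₁ B₂` over the
unordered pairs of distinct blocks, here enumerated by increasing minimum. -/
def iotaTotal (P : Finset (Finset (Fin n))) : ℕ :=
  ∑ B₁ ∈ P, ∑ B₂ ∈ P, if bmin B₁ < bmin B₂ then iota B₁ B₂ else 0

end


/-! ### Auxiliary development for statement13 -/

section Statement13Aux

variable {R : Type*} [CommRing R]

open Classical in
/-- Nonnegative ±1/0 paths of length `ℓ` ending at height `k`. -/
noncomputable def dykSet (ℓ : ℕ) (k : ℤ) : Finset (Fin ℓ → MStep) :=
  Finset.univ.filter (fun ω : Fin ℓ → MStep =>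
    (∀ i ∈ Finset.range (ℓ + 1), 0 ≤ height ω i) ∧ height ω ℓ = k)

lemma mem_dykSet {ℓ : ℕ} {k : ℤ} {ω : Fin ℓ → MStep} :
    ω ∈ dykSet ℓ k ↔ (∀ i ∈ Finset.range (ℓ + 1), 0 ≤ height ω i) ∧ height ω ℓ = k := by
  simp [dykSet]

lemma mem_motzkinPaths {m : ℕ} {ω : Fin m → MStep} :
    ω ∈ motzkinPaths m ↔
      (∀ i ∈ Finset.range (m + 1), 0 ≤ height ω i) ∧ height ω m = 0 := by
  simp [motzkinPaths]

lemma mem_dyckPaths {m : ℕ} {ω : Fin m → MStep} :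
    ω ∈ dyckPaths m ↔
      ((∀ i ∈ Finset.range (m + 1), 0 ≤ height ω i) ∧ height ω m = 0) ∧
        ∀ i, ω i ≠ MStep.flat := by
  rw [dyckPaths, Finset.mem_filter, mem_motzkinPaths]

/-- Sum of S-weights over nonnegative paths of length `ℓ` ending at height `k`. -/
noncomputable def Dyk (α : ℕ → R) (ℓ : ℕ) (k : ℤ) : R :=
  ∑ ω ∈ dykSet ℓ k, sweight α ω

lemma height_eq_sum_ite {ℓ : ℕ} (ω : Fin ℓ → MStep) (i : ℕ) :
    height ω i = ∑ j : Fin ℓ, if (j : ℕ) < i then (ω j).val else 0 := by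
  rw [height, Finset.sum_filter]

lemma height_snoc_of_le {ℓ : ℕ} (ω : Fin ℓ → MStep) (s : MStep) {i : ℕ} (hi : i ≤ ℓ) :
    height (Fin.snoc ω s) i = height ω i := by
  rw [height_eq_sum_ite, height_eq_sum_ite, Fin.sum_univ_castSucc]
  simp [Nat.not_lt.mpr hi]

lemma height_snoc_last {ℓ : ℕ} (ω : Fin ℓ → MStep) (s : MStep) :
    height (Fin.snoc ω s) (ℓ + 1) = height ω ℓ + s.val := by
  rw [height_eq_sum_ite, height_eq_sum_ite, Fin.sum_univ_castSucc]
  have h1 : ∀ j : Fin ℓ, (j : ℕ) < ℓ + 1 := fun j => Nat.lt_succ_of_lt j.is_lt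
  simp [h1, Fin.is_lt]

lemma sweight_snoc {ℓ : ℕ} (α : ℕ → R) (ω : Fin ℓ → MStep) (s : MStep) :
    sweight α (Fin.snoc ω s) =
      sweight α ω * (match s with
        | MStep.up => (1 : R)
        | MStep.down => α (height ω ℓ).toNat
        | MStep.flat => (0 : R)) := by
  rw [sweight, sweight, Fin.prod_univ_castSucc]
  congr 1
  · refine Finset.prod_congr rfl fun j _ => ?_
    have hh := height_snoc_of_le ω s (le_of_lt j.is_lt)
    cases hs : ω j <;> simp [hs, hh]
  · have hh := height_snoc_of_le ω s (le_refl ℓ)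
    cases s <;> simp [hh]

lemma MStep.sum_univ {M : Type*} [AddCommMonoid M] (g : MStep → M) :
    ∑ s : MStep, g s = g MStep.up + g MStep.down + g MStep.flat := by
  have huniv : (Finset.univ : Finset MStep) = {MStep.up, MStep.down, MStep.flat} := by
    decide
  rw [huniv, Finset.sum_insert (by decide), Finset.sum_insert (by decide),
    Finset.sum_singleton, add_assoc]

lemma Dyk_zero (α : ℕ → R) (k : ℤ) : Dyk α 0 k = if k = 0 then 1 else 0 := by
  have h0 : ∀ ω : Fin 0 → MStep, ∀ i : ℕ, height ω i = 0 := by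
    intro ω i; rw [height_eq_sum_ite]; simp
  rw [Dyk]
  by_cases hk : k = 0
  · subst hk
    rw [if_pos rfl]
    rw [show dykSet 0 (0 : ℤ) = {fun i => i.elim0} from
      Finset.eq_singleton_iff_unique_mem.mpr
        ⟨mem_dykSet.mpr ⟨fun i _ => le_of_eq (h0 _ i).symm, h0 _ 0⟩,
          fun ω _ => funext fun i => i.elim0⟩]
    rw [Finset.sum_singleton, sweight]
    simp
  · rw [if_neg hk]
    apply Finset.sum_eq_zero
    intro ω hω
    exact absurd (mem_dykSet.mp hω).2 (by rw [h0]; exact fun h => hk h.symm)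

lemma Dyk_neg (α : ℕ → R) (ℓ : ℕ) {k : ℤ} (hk : k < 0) : Dyk α ℓ k = 0 := by
  rw [Dyk]
  apply Finset.sum_eq_zero
  intro ω hω
  rw [mem_dykSet] at hω
  have := hω.1 ℓ (Finset.self_mem_range_succ ℓ)
  rw [hω.2] at this
  omega

lemma Dyk_succ (α : ℕ → R) (ℓ : ℕ) {k : ℤ} (hk : 0 ≤ k) :
    Dyk α (ℓ + 1) k = Dyk α ℓ (k - 1) + α (k + 1).toNat * Dyk α ℓ (k + 1) := by
  have key : ∀ (s : MStep) (ω : Fin ℓ → MStep),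
      Fin.snoc ω s ∈ dykSet (ℓ + 1) k ↔ ω ∈ dykSet ℓ (k - s.val) := by
    intro s ω
    rw [mem_dykSet, mem_dykSet]
    constructor
    · rintro ⟨h1, h2⟩
      refine ⟨fun i hi => ?_, ?_⟩
      · rw [Finset.mem_range] at hi
        have := h1 i (Finset.mem_range.mpr (by omega))
        rwa [height_snoc_of_le ω s (by omega)] at this
      · rw [height_snoc_last] at h2; omega
    · rintro ⟨h1, h2⟩
      have hend : height (Fin.snoc ω s) (ℓ + 1) = k := by
        rw [height_snoc_last, h2]; ring
      refine ⟨fun i hi => ?_, hend⟩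
      rw [Finset.mem_range] at hi
      rcases Nat.lt_succ_iff_lt_or_eq.mp hi with hi' | hi'
      · rw [height_snoc_of_le ω s (by omega)]
        exact h1 i (Finset.mem_range.mpr hi')
      · subst hi'; rw [hend]; exact hk
  have hsig : Dyk α (ℓ + 1) k =
      ∑ p ∈ (Finset.univ : Finset MStep).sigma (fun s => dykSet ℓ (k - s.val)),
        sweight α (Fin.snoc p.2 p.1) := by
    rw [Dyk]
    refine Finset.sum_nbij' (fun ω' => ⟨ω' (Fin.last ℓ), Fin.init ω'⟩)
      (fun p => Fin.snoc p.2 p.1) ?_ ?_ ?_ ?_ ?_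
    · intro ω' hω'
      rw [Finset.mem_sigma]
      refine ⟨Finset.mem_univ _, ?_⟩
      rw [← key]
      rwa [Fin.snoc_init_self]
    · intro p hp
      rw [Finset.mem_sigma] at hp
      exact (key p.1 p.2).mpr hp.2
    · intro ω' _
      exact Fin.snoc_init_self ω'
    · rintro ⟨s, ω⟩ _
      simp [Fin.snoc_last, Fin.init_snoc]
    · intro ω' _
      rw [Fin.snoc_init_self]
  rw [hsig, Finset.sum_sigma, MStep.sum_univ]
  have hup : (∑ ω ∈ dykSet ℓ (k - (MStep.up).val), sweight α (Fin.snoc ω MStep.up))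
      = Dyk α ℓ (k - 1) := by
    rw [Dyk, show k - (MStep.up).val = k - 1 from rfl]
    refine Finset.sum_congr rfl fun ω _ => ?_
    rw [sweight_snoc, mul_one]
  have hdown : (∑ ω ∈ dykSet ℓ (k - (MStep.down).val), sweight α (Fin.snoc ω MStep.down))
      = α (k + 1).toNat * Dyk α ℓ (k + 1) := by
    have hkk : k - (MStep.down).val = k + 1 := by
      show k - (-1) = k + 1; ring
    rw [hkk, Dyk, Finset.mul_sum]
    refine Finset.sum_congr rfl fun ω hω => ?_
    rw [sweight_snoc, (mem_dykSet.mp hω).2, mul_comm]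
  have hflat : (∑ ω ∈ dykSet ℓ (k - (MStep.flat).val), sweight α (Fin.snoc ω MStep.flat))
      = 0 := by
    refine Finset.sum_eq_zero fun ω _ => ?_
    rw [sweight_snoc, mul_zero]
  rw [hup, hdown, hflat, add_zero]

/-- The right-hand side of statement13 equals `Dyk α m 0`. -/
lemma rhs_eq_Dyk (α : ℕ → R) (m : ℕ) :
    (∑ ω ∈ dyckPaths m, sweight α ω) = Dyk α m 0 := by
  rw [Dyk]
  refine Finset.sum_subset ?_ ?_
  · intro ω hω
    exact mem_dykSet.mpr (mem_dyckPaths.mp hω).1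
  · intro ω hω hω'
    have : ¬ ∀ i, ω i ≠ MStep.flat := by
      intro hflat
      exact hω' (mem_dyckPaths.mpr ⟨mem_dykSet.mp hω, hflat⟩)
    push_neg at this
    obtain ⟨i, hi⟩ := this
    rw [sweight]
    refine Finset.prod_eq_zero (Finset.mem_univ i) ?_
    rw [hi]


/-! ### Partial set partitions -/

variable {n : ℕ}

/-- `(Q, O)` is a partial partition at stage `m`: `Q` partitions the elements with
value `< m`, and `O` is the set of blocks marked "open". -/
def isPP (m : ℕ) (Q O : Finset (Finset (Fin n))) : Prop :=
  (∀ B ∈ Q, B.Nonempty) ∧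
  (∀ B ∈ Q, ∀ i ∈ B, (i : ℕ) < m) ∧
  (∀ i : Fin n, (i : ℕ) < m → ∃ B ∈ Q, i ∈ B) ∧
  (∀ B ∈ Q, ∀ C ∈ Q, ∀ i : Fin n, i ∈ B → i ∈ C → B = C) ∧
  O ⊆ Q

/-- The arc `(j, l)` is covered: either nested below a closed arc, or below the
pending arc of an open block all of whose current elements are `< j`. -/
def covered (Q O : Finset (Finset (Fin n))) (j l : Fin n) : Prop :=
  (∃ a b, arc Q a b ∧ a < j ∧ l < b) ∨ (∃ C ∈ O, ∀ i ∈ C, i < j)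

open Classical in
noncomputable def nY (Q O : Finset (Finset (Fin n))) : ℕ :=
  (Finset.univ.filter fun i : Fin n => ∃ l, arc Q i l ∧ ¬ covered Q O i l).card

open Classical in
noncomputable def nV (Q O : Finset (Finset (Fin n))) : ℕ :=
  (Finset.univ.filter fun i : Fin n => ∃ l, arc Q i l ∧ covered Q O i l).card

/-- Weight of a partial partition. -/
noncomputable def pwt (x y v : R) (Q O : Finset (Finset (Fin n))) : R :=
  x ^ Q.card * y ^ nY Q O * v ^ nV Q O

open Classical in
noncomputable def ppSet (n m h : ℕ) :
    Finset (Finset (Finset (Fin n)) × Finset (Finset (Fin n))) :=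
  Finset.univ.filter fun p => isPP m p.1 p.2 ∧ p.2.card = h

lemma mem_ppSet {m h : ℕ} {p : Finset (Finset (Fin n)) × Finset (Finset (Fin n))} :
    p ∈ ppSet n m h ↔ isPP m p.1 p.2 ∧ p.2.card = h := by
  simp [ppSet]

noncomputable def PPsum (x y v : R) (n m h : ℕ) : R :=
  ∑ p ∈ ppSet n m h, pwt x y v p.1 p.2

lemma mem_setPartitions {P : Finset (Finset (Fin n))} :
    P ∈ setPartitions n ↔ (∀ B ∈ P, B.Nonempty) ∧ (∀ i : Fin n, ∃ B ∈ P, i ∈ B) ∧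
      ∀ B ∈ P, ∀ C ∈ P, ∀ i : Fin n, i ∈ B → i ∈ C → B = C := by
  simp [setPartitions]

open Classical in
lemma cnt_eq_card_filter (P : Fin n → Prop) :
    cnt P = (Finset.univ.filter P).card := by
  rw [cnt, Nat.card_eq_fintype_card, Fintype.card_subtype]

lemma arc_src_unique {Q : Finset (Finset (Fin n))}
    (hdisj : ∀ B ∈ Q, ∀ C ∈ Q, ∀ i : Fin n, i ∈ B → i ∈ C → B = C)
    {i l l' : Fin n} (h1 : arc Q i l) (h2 : arc Q i l') : l = l' := by
  obtain ⟨hil, B, hB, hiB, hlB, hbet⟩ := h1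
  obtain ⟨hil', C, hC, hiC, hlC, hbet'⟩ := h2
  have hBC : B = C := hdisj B hB C hC i hiB hiC
  subst hBC
  by_contra hne
  rcases lt_or_gt_of_ne hne with hlt | hlt
  · exact hbet' l hlB ⟨hil, hlt⟩
  · exact hbet l' hlC ⟨hil', hlt⟩

lemma arc_tgt_unique {Q : Finset (Finset (Fin n))}
    (hdisj : ∀ B ∈ Q, ∀ C ∈ Q, ∀ i : Fin n, i ∈ B → i ∈ C → B = C)
    {i j l : Fin n} (h1 : arc Q i l) (h2 : arc Q j l) : i = j := by
  obtain ⟨hil, B, hB, hiB, hlB, hbet⟩ := h1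
  obtain ⟨hjl, C, hC, hjC, hlC, hbet'⟩ := h2
  have hBC : B = C := hdisj B hB C hC l hlB hlC
  subst hBC
  by_contra hne
  rcases lt_or_gt_of_ne hne with hlt | hlt
  · exact hbet j hjC ⟨hlt, hjl⟩
  · exact hbet' i hiB ⟨hlt, hil⟩

lemma arc_of_lt_in_block {Q : Finset (Finset (Fin n))} {B : Finset (Fin n)} {i : Fin n}
    (hB : B ∈ Q) (hiB : i ∈ B) (hex : ∃ j ∈ B, i < j) : ∃ l ∈ B, arc Q i l := by
  have hS : (B.filter (fun j => i < j)).Nonempty := by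
    obtain ⟨j, hjB, hij⟩ := hex
    exact ⟨j, Finset.mem_filter.mpr ⟨hjB, hij⟩⟩
  set l := (B.filter (fun j => i < j)).min' hS with hl
  have hlmem := Finset.min'_mem _ hS
  rw [Finset.mem_filter] at hlmem
  refine ⟨l, hlmem.1, hlmem.2, B, hB, hiB, hlmem.1, fun k hk ⟨h1, h2⟩ => ?_⟩
  have : l ≤ k := Finset.min'_le _ k (Finset.mem_filter.mpr ⟨hk, h1⟩)
  exact absurd h2 (not_lt.mpr this)

lemma no_arc_of_max {Q : Finset (Finset (Fin n))} {B : Finset (Fin n)} {i : Fin n}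
    (hdisj : ∀ B ∈ Q, ∀ C ∈ Q, ∀ i : Fin n, i ∈ B → i ∈ C → B = C)
    (hB : B ∈ Q) (hiB : i ∈ B) (hmax : ∀ j ∈ B, j ≤ i) : ¬ ∃ l, arc Q i l := by
  rintro ⟨l, hil, C, hC, hiC, hlC, -⟩
  have : C = B := hdisj C hC B hB i hiC hiB
  subst this
  exact absurd hil (not_lt.mpr (hmax l hlC))

lemma arc_mem_block {Q : Finset (Finset (Fin n))} {i l : Fin n} (h : arc Q i l) :
    ∃ B ∈ Q, i ∈ B ∧ l ∈ B := by
  obtain ⟨-, B, hB, hiB, hlB, -⟩ := h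
  exact ⟨B, hB, hiB, hlB⟩

lemma isERecP_iff {Q : Finset (Finset (Fin n))}
    (hdisj : ∀ B ∈ Q, ∀ C ∈ Q, ∀ i : Fin n, i ∈ B → i ∈ C → B = C) (i : Fin n) :
    isERecP Q i ↔ ∃ l, arc Q i l ∧ ¬ covered Q ∅ i l := by
  constructor
  · rintro ⟨l, hal, hall⟩
    refine ⟨l, hal, ?_⟩
    rintro (⟨a, b, hab, hai, hlb⟩ | ⟨C, hC, -⟩)
    · exact absurd (hall a hai b hab) (not_lt.mpr (le_of_lt hlb))
    · exact absurd hC (Finset.notMem_empty C)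
  · rintro ⟨l, hal, hcov⟩
    refine ⟨l, hal, fun j hj b hjb => ?_⟩
    by_contra hlb
    push_neg at hlb
    rcases eq_or_lt_of_le hlb with heq | hlt
    · subst heq
      exact absurd (arc_tgt_unique hdisj hal hjb) (ne_of_gt hj)
    · exact hcov (Or.inl ⟨j, b, hjb, hj, hlt⟩)

lemma card_noArc {Q : Finset (Finset (Fin n))}
    (hne : ∀ B ∈ Q, B.Nonempty) (hcov : ∀ i : Fin n, ∃ B ∈ Q, i ∈ B)
    (hdisj : ∀ B ∈ Q, ∀ C ∈ Q, ∀ i : Fin n, i ∈ B → i ∈ C → B = C) :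
    (Finset.univ.filter fun i : Fin n => ¬ ∃ l, arc Q i l).card = Q.card := by
  classical
  symm
  refine Finset.card_bij (fun B hB => B.max' (hne B hB)) ?_ ?_ ?_
  · intro B hB
    refine Finset.mem_filter.mpr ⟨Finset.mem_univ _, ?_⟩
    exact no_arc_of_max hdisj hB (Finset.max'_mem _ _) (fun j hj => Finset.le_max' _ j hj)
  · intro B₁ h₁ B₂ h₂ heq
    refine hdisj B₁ h₁ B₂ h₂ (B₁.max' (hne B₁ h₁)) (Finset.max'_mem _ _) ?_
    rw [heq]; exact Finset.max'_mem _ _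
  · intro i hi
    rw [Finset.mem_filter] at hi
    obtain ⟨B, hB, hiB⟩ := hcov i
    refine ⟨B, hB, ?_⟩
    apply le_antisymm
    · apply Finset.max'_le
      intro j hj
      by_contra hji
      push_neg at hji
      obtain ⟨l, hlB, hal⟩ := arc_of_lt_in_block hB hiB ⟨j, hj, hji⟩
      exact hi.2 ⟨l, hal⟩
    · exact Finset.le_max' _ i hiB

open Classical in
lemma nY_add_nV {Q O : Finset (Finset (Fin n))}
    (hdisj : ∀ B ∈ Q, ∀ C ∈ Q, ∀ i : Fin n, i ∈ B → i ∈ C → B = C) :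
    nY Q O + nV Q O = (Finset.univ.filter fun i : Fin n => ∃ l, arc Q i l).card := by
  rw [nY, nV, ← Finset.card_union_of_disjoint, Finset.filter_union_right]
  · congr 1
    apply Finset.filter_congr
    intro i _
    constructor
    · rintro (⟨l, hl, -⟩ | ⟨l, hl, -⟩) <;> exact ⟨l, hl⟩
    · rintro ⟨l, hl⟩
      by_cases hc : covered Q O i l
      · exact Or.inr ⟨l, hl, hc⟩
      · exact Or.inl ⟨l, hl, hc⟩
  · rw [Finset.disjoint_left]
    rintro i h1 h2
    rw [Finset.mem_filter] at h1 h2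
    obtain ⟨l, hl, hnc⟩ := h1.2
    obtain ⟨l', hl', hc⟩ := h2.2
    rw [arc_src_unique hdisj hl hl'] at hnc
    exact hnc hc

lemma pwt_final (x y v : R) {Q : Finset (Finset (Fin n))}
    (hne : ∀ B ∈ Q, B.Nonempty) (hcov : ∀ i : Fin n, ∃ B ∈ Q, i ∈ B)
    (hdisj : ∀ B ∈ Q, ∀ C ∈ Q, ∀ i : Fin n, i ∈ B → i ∈ C → B = C) :
    pwt x y v Q ∅ = x ^ Q.card * y ^ perecP Q * v ^ (n - Q.card - perecP Q) := by
  classical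
  have hperec : perecP Q = nY Q ∅ := by
    rw [perecP, cnt_eq_card_filter, nY]
    congr 1
    exact Finset.filter_congr fun i _ => isERecP_iff hdisj i
  have htot : nY Q ∅ + nV Q ∅ + Q.card = n := by
    rw [nY_add_nV hdisj]
    rw [← card_noArc hne hcov hdisj]
    rw [Finset.card_filter_add_card_filter_not]
    simp
  have hV : nV Q ∅ = n - Q.card - perecP Q := by omega
  rw [pwt, hperec, hV, hperec]

lemma arc_empty (i l : Fin n) : ¬ arc (∅ : Finset (Finset (Fin n))) i l := by
  rintro ⟨-, B, hB, -⟩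
  exact absurd hB (Finset.notMem_empty B)

lemma PPsum_zero (x y v : R) (h : ℕ) :
    PPsum x y v n 0 h = if h = 0 then 1 else 0 := by
  classical
  rw [PPsum]
  have hQempty : ∀ p : Finset (Finset (Fin n)) × Finset (Finset (Fin n)),
      p ∈ ppSet n 0 h → p.1 = ∅ ∧ p.2 = ∅ := by
    intro p hp
    obtain ⟨⟨h1, h2, h3, h4, h5⟩, h6⟩ := mem_ppSet.mp hp
    have hQ : p.1 = ∅ := by
      rw [Finset.eq_empty_iff_forall_notMem]
      intro B hB
      obtain ⟨i, hi⟩ := h1 B hB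
      exact absurd (h2 B hB i hi) (by omega)
    exact ⟨hQ, Finset.subset_empty.mp (hQ ▸ h5)⟩
  by_cases hh : h = 0
  · subst hh
    rw [if_pos rfl]
    have hset : ppSet n 0 0 = {((∅ : Finset (Finset (Fin n))), (∅ : Finset (Finset (Fin n))))} := by
      apply Finset.eq_singleton_iff_unique_mem.mpr
      constructor
      · refine mem_ppSet.mpr ⟨⟨?_, ?_, ?_, ?_, ?_⟩, Finset.card_empty⟩
        · intro B hB; exact absurd hB (Finset.notMem_empty B)
        · intro B hB; exact absurd hB (Finset.notMem_empty B)
        · intro i hi; exact absurd hi (by omega)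
        · intro B hB; exact absurd hB (Finset.notMem_empty B)
        · exact Finset.Subset.refl _
      · intro p hp
        obtain ⟨hQ, hO⟩ := hQempty p hp
        exact Prod.ext hQ hO
    rw [hset, Finset.sum_singleton, pwt]
    have hY : nY (∅ : Finset (Finset (Fin n))) ∅ = 0 := by
      rw [nY, Finset.card_eq_zero, Finset.filter_eq_empty_iff]
      rintro i - ⟨l, hl, -⟩
      exact arc_empty i l hl
    have hV : nV (∅ : Finset (Finset (Fin n))) ∅ = 0 := by
      rw [nV, Finset.card_eq_zero, Finset.filter_eq_empty_iff]
      rintro i - ⟨l, hl, -⟩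
      exact arc_empty i l hl
    rw [hY, hV]
    simp
  · rw [if_neg hh]
    apply Finset.sum_eq_zero
    intro p hp
    have h6 := (mem_ppSet.mp hp).2
    rw [(hQempty p hp).2] at h6
    exact absurd (Finset.card_empty ▸ h6) (fun hc => hh hc.symm)

lemma PPsum_last (x y v : R) :
    PPsum x y v n n 0 =
      ∑ P ∈ setPartitions n, x ^ P.card * y ^ perecP P * v ^ (n - P.card - perecP P) := by
  classical
  rw [PPsum]
  refine Finset.sum_nbij' (fun p => p.1) (fun Q => (Q, ∅)) ?_ ?_ ?_ ?_ ?_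
  · intro p hp
    obtain ⟨⟨h1, h2, h3, h4, h5⟩, h6⟩ := mem_ppSet.mp hp
    exact mem_setPartitions.mpr ⟨h1, fun i => h3 i i.isLt, h4⟩
  · intro Q hQ
    obtain ⟨h1, h2, h3⟩ := mem_setPartitions.mp hQ
    refine mem_ppSet.mpr ⟨⟨h1, fun B _ i _ => i.isLt, fun i _ => h2 i, h3, ?_⟩, Finset.card_empty⟩
    exact Finset.empty_subset Q
  · intro p hp
    have h6 := (mem_ppSet.mp hp).2
    exact Prod.ext rfl (Finset.card_eq_zero.mp h6).symm
  · intro Q hQ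
    rfl
  · intro p hp
    obtain ⟨⟨h1, h2, h3, h4, h5⟩, h6⟩ := mem_ppSet.mp hp
    have hO : p.2 = ∅ := Finset.card_eq_zero.mp h6
    rw [show (p : Finset (Finset (Fin n)) × Finset (Finset (Fin n))) = (p.1, p.2) from rfl, hO]
    exact pwt_final x y v h1 (fun i => h3 i i.isLt) h4

/-! #### Transition lemmas -/

lemma mem_block_lt {m : ℕ} {Q O : Finset (Finset (Fin n))} (hPP : isPP m Q O)
    {B : Finset (Fin n)} {i : Fin n} (hB : B ∈ Q) (hiB : i ∈ B) : (i : ℕ) < m :=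
  hPP.2.1 B hB i hiB

lemma not_mem_block {m : ℕ} {Q O : Finset (Finset (Fin n))} (hPP : isPP m Q O)
    {γ : Fin n} (hγ : (γ : ℕ) = m) {B : Finset (Fin n)} (hB : B ∈ Q) : γ ∉ B :=
  fun h => by have := mem_block_lt hPP hB h; omega

lemma arc_lt {m : ℕ} {Q O : Finset (Finset (Fin n))} (hPP : isPP m Q O)
    {i l : Fin n} (h : arc Q i l) : (i : ℕ) < m ∧ (l : ℕ) < m := by
  obtain ⟨B, hB, hiB, hlB⟩ := arc_mem_block h
  exact ⟨mem_block_lt hPP hB hiB, mem_block_lt hPP hB hlB⟩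

lemma singleton_not_mem {m : ℕ} {Q O : Finset (Finset (Fin n))} (hPP : isPP m Q O)
    {γ : Fin n} (hγ : (γ : ℕ) = m) : {γ} ∉ Q :=
  fun h => not_mem_block hPP hγ h (Finset.mem_singleton_self γ)

lemma arc_insert_singleton {m : ℕ} {Q O : Finset (Finset (Fin n))} (hPP : isPP m Q O)
    {γ : Fin n} (hγ : (γ : ℕ) = m) (i l : Fin n) :
    arc (insert {γ} Q) i l ↔ arc Q i l := by
  constructor
  · rintro ⟨hil, B, hB, hiB, hlB, hbet⟩
    rcases Finset.mem_insert.mp hB with hBγ | hBQ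
    · subst hBγ
      rw [Finset.mem_singleton] at hiB hlB
      rw [hiB, hlB] at hil
      exact absurd hil (lt_irrefl γ)
    · exact ⟨hil, B, hBQ, hiB, hlB, hbet⟩
  · rintro ⟨hil, B, hB, hiB, hlB, hbet⟩
    exact ⟨hil, B, Finset.mem_insert_of_mem hB, hiB, hlB, hbet⟩

lemma covered_insert_singleton {m : ℕ} {Q O : Finset (Finset (Fin n))} (hPP : isPP m Q O)
    {γ : Fin n} (hγ : (γ : ℕ) = m) {j l : Fin n} (hj : (j : ℕ) < m)
    {O' : Finset (Finset (Fin n))} (hO' : O' = O ∨ O' = insert {γ} O) :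
    covered (insert {γ} Q) O' j l ↔ covered Q O j l := by
  constructor
  · rintro (⟨a, b, hab, haj, hlb⟩ | ⟨C, hC, hCj⟩)
    · exact Or.inl ⟨a, b, (arc_insert_singleton hPP hγ a b).mp hab, haj, hlb⟩
    · rcases hO' with rfl | rfl
      · exact Or.inr ⟨C, hC, hCj⟩
      · rcases Finset.mem_insert.mp hC with rfl | hCO
        · have := hCj γ (Finset.mem_singleton_self γ)
          have : (γ : ℕ) < (j : ℕ) := this
          omega
        · exact Or.inr ⟨C, hCO, hCj⟩
  · rintro (⟨a, b, hab, haj, hlb⟩ | ⟨C, hC, hCj⟩)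
    · exact Or.inl ⟨a, b, (arc_insert_singleton hPP hγ a b).mpr hab, haj, hlb⟩
    · rcases hO' with rfl | rfl
      · exact Or.inr ⟨C, hC, hCj⟩
      · exact Or.inr ⟨C, Finset.mem_insert_of_mem hC, hCj⟩

open Classical in
lemma nY_nV_insert_singleton {m : ℕ} {Q O : Finset (Finset (Fin n))} (hPP : isPP m Q O)
    {γ : Fin n} (hγ : (γ : ℕ) = m)
    {O' : Finset (Finset (Fin n))} (hO' : O' = O ∨ O' = insert {γ} O) :
    nY (insert {γ} Q) O' = nY Q O ∧ nV (insert {γ} Q) O' = nV Q O := by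
  constructor <;>
  · first
      | rw [nY, nY]
      | rw [nV, nV]
    congr 1
    refine Finset.filter_congr fun i _ => ?_
    constructor
    · rintro ⟨l, hal, hc⟩
      have hal' := (arc_insert_singleton hPP hγ i l).mp hal
      have hi : (i : ℕ) < m := (arc_lt hPP hal').1
      refine ⟨l, hal', ?_⟩
      rwa [← covered_insert_singleton hPP hγ hi hO']
    · rintro ⟨l, hal, hc⟩
      have hi : (i : ℕ) < m := (arc_lt hPP hal).1
      refine ⟨l, (arc_insert_singleton hPP hγ i l).mpr hal, ?_⟩
      rwa [covered_insert_singleton hPP hγ hi hO']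

lemma pwt_insert_singleton (x y v : R) {m : ℕ} {Q O : Finset (Finset (Fin n))}
    (hPP : isPP m Q O) {γ : Fin n} (hγ : (γ : ℕ) = m)
    {O' : Finset (Finset (Fin n))} (hO' : O' = O ∨ O' = insert {γ} O) :
    pwt x y v (insert {γ} Q) O' = x * pwt x y v Q O := by
  obtain ⟨hY, hV⟩ := nY_nV_insert_singleton hPP hγ hO'
  rw [pwt, pwt, hY, hV, Finset.card_insert_of_notMem (singleton_not_mem hPP hγ), pow_succ]
  ring

lemma isPP_insert_singleton {m : ℕ} {Q O : Finset (Finset (Fin n))} (hPP : isPP m Q O)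
    {γ : Fin n} (hγ : (γ : ℕ) = m)
    {O' : Finset (Finset (Fin n))} (hO' : O' = O ∨ O' = insert {γ} O) :
    isPP (m + 1) (insert {γ} Q) O' := by
  obtain ⟨h1, h2, h3, h4, h5⟩ := hPP
  refine ⟨?_, ?_, ?_, ?_, ?_⟩
  · intro B hB
    rcases Finset.mem_insert.mp hB with rfl | hBQ
    · exact ⟨γ, Finset.mem_singleton_self γ⟩
    · exact h1 B hBQ
  · intro B hB i hiB
    rcases Finset.mem_insert.mp hB with rfl | hBQ
    · rw [Finset.mem_singleton] at hiB
      subst hiB; omega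
    · have := h2 B hBQ i hiB; omega
  · intro i hi
    by_cases him : (i : ℕ) < m
    · obtain ⟨B, hB, hiB⟩ := h3 i him
      exact ⟨B, Finset.mem_insert_of_mem hB, hiB⟩
    · have : i = γ := Fin.ext (by omega)
      subst this
      exact ⟨{i}, Finset.mem_insert_self _ _, Finset.mem_singleton_self i⟩
  · intro B hB C hC i hiB hiC
    rcases Finset.mem_insert.mp hB with rfl | hBQ <;>
      rcases Finset.mem_insert.mp hC with hq | hq
    · rw [hq]
    · rw [Finset.mem_singleton] at hiB
      subst hiB
      exact absurd hiC (not_mem_block ⟨h1, h2, h3, h4, h5⟩ hγ hq)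
    · subst hq
      rw [Finset.mem_singleton] at hiC
      subst hiC
      exact absurd hiB (not_mem_block ⟨h1, h2, h3, h4, h5⟩ hγ hBQ)
    · exact h4 B hBQ C hq i hiB hiC
  · rcases hO' with rfl | rfl
    · exact h5.trans (Finset.subset_insert _ _)
    · exact Finset.insert_subset_insert _ h5

lemma isPP_erase_singleton {m : ℕ} {Q' O' : Finset (Finset (Fin n))}
    (hPP : isPP (m + 1) Q' O') {γ : Fin n} (hγ : (γ : ℕ) = m)
    (hmem : {γ} ∈ Q') : isPP m (Q'.erase {γ}) (O'.erase {γ}) := by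
  obtain ⟨h1, h2, h3, h4, h5⟩ := hPP
  have hval : ∀ B ∈ Q'.erase {γ}, ∀ i ∈ B, (i : ℕ) < m := by
    intro B hB i hiB
    have hBQ := Finset.mem_of_mem_erase hB
    have hlt := h2 B hBQ i hiB
    have : i ≠ γ := fun hiγ => (Finset.ne_of_mem_erase hB)
      (h4 B hBQ {γ} hmem i hiB (by rw [hiγ]; exact Finset.mem_singleton_self γ))
    have : (i : ℕ) ≠ m := fun hc => this (Fin.ext (by omega))
    omega
  refine ⟨fun B hB => h1 B (Finset.mem_of_mem_erase hB), hval, ?_, ?_, ?_⟩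
  · intro i hi
    obtain ⟨B, hB, hiB⟩ := h3 i (by omega)
    refine ⟨B, Finset.mem_erase.mpr ⟨?_, hB⟩, hiB⟩
    intro hc
    subst hc
    rw [Finset.mem_singleton] at hiB
    subst hiB
    omega
  · intro B hB C hC i hiB hiC
    exact h4 B (Finset.mem_of_mem_erase hB) C (Finset.mem_of_mem_erase hC) i hiB hiC
  · exact fun C hC => Finset.mem_erase.mpr
      ⟨Finset.ne_of_mem_erase hC, h5 (Finset.mem_of_mem_erase hC)⟩

/-- Covering condition for the new arc created when `γ` joins the open block `B`. -/
def wcond (B : Finset (Fin n)) (O : Finset (Finset (Fin n))) : Prop :=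
  ∃ C ∈ O.erase B, ∃ u ∈ B, ∀ i ∈ C, i < u

open Classical in
noncomputable def wgt (y v : R) (B : Finset (Fin n)) (O : Finset (Finset (Fin n))) : R :=
  if wcond B O then v else y

lemma wcond_iff_max {B : Finset (Fin n)} {O : Finset (Finset (Fin n))} {t : Fin n}
    (htB : t ∈ B) (htmax : ∀ j ∈ B, j ≤ t) :
    wcond B O ↔ ∃ C ∈ O.erase B, ∀ i ∈ C, i < t := by
  constructor
  · rintro ⟨C, hC, u, huB, hu⟩
    exact ⟨C, hC, fun i hi => lt_of_lt_of_le (hu i hi) (htmax u huB)⟩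
  · rintro ⟨C, hC, hu⟩
    exact ⟨C, hC, t, htB, hu⟩

lemma val_max' {B : Finset (Fin n)} (h : B.Nonempty) : ((B.max' h : Fin n) : ℕ) = bmax B := by
  refine le_antisymm (Finset.le_sup (Finset.max'_mem B h)) (Finset.sup_le fun i hi => ?_)
  exact Fin.le_iff_val_le_val.mp (Finset.le_max' B i hi)

open Classical in
lemma sum_wgt (y v : R) {O : Finset (Finset (Fin n))}
    (hne : ∀ B ∈ O, B.Nonempty)
    (hdisj : ∀ B ∈ O, ∀ C ∈ O, ∀ i : Fin n, i ∈ B → i ∈ C → B = C)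
    (hO : O.Nonempty) :
    ∑ B ∈ O, wgt y v B O = y + ((O.card - 1 : ℕ) : R) * v := by
  obtain ⟨B₀, hB₀, hmin⟩ := Finset.exists_min_image O (fun B => bmax B) hO
  have hcond : ∀ B ∈ O, (wcond B O ↔ B ≠ B₀) := by
    intro B hB
    constructor
    · rintro ⟨C, hC, u, huB, hu⟩ rfl
      have hCO := Finset.mem_of_mem_erase hC
      have h1 : bmax C < (u : ℕ) := by
        have := hu _ (Finset.max'_mem C (hne C hCO))
        have h1' : ((C.max' (hne C hCO) : Fin n) : ℕ) < (u : ℕ) := this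
        rwa [val_max'] at h1'
      have h2 : (u : ℕ) ≤ bmax B := Finset.le_sup huB
      have h3 : bmax B ≤ bmax C := hmin C hCO
      omega
    · intro hBne
      have hmaxlt : bmax B₀ < bmax B := by
        rcases lt_or_eq_of_le (hmin B hB) with hlt | heq
        · exact hlt
        · exfalso
          apply hBne
          have h₁ : ((B.max' (hne B hB) : Fin n) : ℕ) = ((B₀.max' (hne B₀ hB₀) : Fin n) : ℕ) := by
            rw [val_max', val_max', heq]
          exact hdisj B hB B₀ hB₀ _ (Finset.max'_mem B (hne B hB))
            (Fin.ext h₁ ▸ Finset.max'_mem B₀ (hne B₀ hB₀))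
      refine ⟨B₀, Finset.mem_erase.mpr ⟨fun hc => hBne hc.symm, hB₀⟩,
        B.max' (hne B hB), Finset.max'_mem B (hne B hB), fun i hi => ?_⟩
      have hival : (i : ℕ) ≤ bmax B₀ := Finset.le_sup hi
      have : (i : ℕ) < ((B.max' (hne B hB) : Fin n) : ℕ) := by rw [val_max']; omega
      exact this
  have hstep : ∑ B ∈ O, wgt y v B O = ∑ B ∈ O, (if B = B₀ then y else v) := by
    refine Finset.sum_congr rfl fun B hB => ?_
    rw [wgt]
    by_cases hBB : B = B₀
    · rw [if_pos hBB, if_neg (fun hc => ((hcond B hB).mp hc) hBB)]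
    · rw [if_pos ((hcond B hB).mpr hBB), if_neg hBB]
  rw [hstep, ← Finset.add_sum_erase O _ hB₀, if_pos rfl]
  have h2 : ∑ B ∈ O.erase B₀, (if B = B₀ then y else v) = ((O.card - 1 : ℕ) : R) * v := by
    rw [Finset.sum_congr rfl fun B hB => if_neg (Finset.ne_of_mem_erase hB),
      Finset.sum_const, Finset.card_erase_of_mem hB₀, nsmul_eq_mul]
  rw [h2]

lemma arc_extend_new {m : ℕ} {Q O : Finset (Finset (Fin n))} (hPP : isPP m Q O)
    {γ : Fin n} (hγ : (γ : ℕ) = m) {B : Finset (Fin n)} (hBQ : B ∈ Q)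
    {t : Fin n} (htB : t ∈ B) (htmax : ∀ j ∈ B, j ≤ t) :
    arc (insert (insert γ B) (Q.erase B)) t γ := by
  have htm : (t : ℕ) < m := mem_block_lt hPP hBQ htB
  refine ⟨Fin.lt_def.mpr (by omega), insert γ B, Finset.mem_insert_self _ _,
    Finset.mem_insert_of_mem htB, Finset.mem_insert_self _ _, ?_⟩
  intro k hk hkk
  rcases Finset.mem_insert.mp hk with rfl | hkB
  · exact absurd hkk.2 (lt_irrefl _)
  · exact absurd hkk.1 (not_lt.mpr (htmax k hkB))

lemma arc_extend_iff {m : ℕ} {Q O : Finset (Finset (Fin n))} (hPP : isPP m Q O)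
    {γ : Fin n} (hγ : (γ : ℕ) = m) {B : Finset (Fin n)} (hBQ : B ∈ Q)
    {t : Fin n} (htB : t ∈ B) (htmax : ∀ j ∈ B, j ≤ t) (i l : Fin n) :
    arc (insert (insert γ B) (Q.erase B)) i l ↔ (arc Q i l ∨ (i = t ∧ l = γ)) := by
  have htm : (t : ℕ) < m := mem_block_lt hPP hBQ htB
  constructor
  · rintro ⟨hil, C, hC, hiC, hlC, hbet⟩
    rcases Finset.mem_insert.mp hC with rfl | hCQ
    · rcases Finset.mem_insert.mp hlC with rfl | hlB
      · have hiB : i ∈ B := by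
          rcases Finset.mem_insert.mp hiC with rfl | h
          · exact absurd hil (lt_irrefl _)
          · exact h
        right
        refine ⟨?_, rfl⟩
        by_contra hit
        have hitlt : i < t := lt_of_le_of_ne (htmax i hiB) hit
        have htγ : t < l := Fin.lt_def.mpr (by omega)
        exact hbet t (Finset.mem_insert_of_mem htB) ⟨hitlt, htγ⟩
      · have hlm : (l : ℕ) < m := mem_block_lt hPP hBQ hlB
        have hiB : i ∈ B := by
          rcases Finset.mem_insert.mp hiC with rfl | h
          · exfalso
            have : (i : ℕ) < (l : ℕ) := Fin.lt_def.mp hil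
            omega
          · exact h
        left
        exact ⟨hil, B, hBQ, hiB, hlB, fun k hk hkk => hbet k (Finset.mem_insert_of_mem hk) hkk⟩
    · left
      exact ⟨hil, C, Finset.mem_of_mem_erase hCQ, hiC, hlC, hbet⟩
  · rintro (⟨hil, C, hC, hiC, hlC, hbet⟩ | ⟨hit, hlγ⟩)
    · by_cases hCB : C = B
      · subst hCB
        refine ⟨hil, insert γ C, Finset.mem_insert_self _ _, Finset.mem_insert_of_mem hiC,
          Finset.mem_insert_of_mem hlC, ?_⟩
        intro k hk hkk
        rcases Finset.mem_insert.mp hk with rfl | hkC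
        · have h1 : (k : ℕ) < (l : ℕ) := Fin.lt_def.mp hkk.2
          have h2 : (l : ℕ) < m := mem_block_lt hPP hC hlC
          omega
        · exact hbet k hkC hkk
      · exact ⟨hil, C, Finset.mem_insert_of_mem (Finset.mem_erase.mpr ⟨hCB, hC⟩),
          hiC, hlC, hbet⟩
    · rw [hit, hlγ]
      exact arc_extend_new hPP hγ hBQ htB htmax

lemma covered_extend_iff {m : ℕ} {Q O : Finset (Finset (Fin n))} (hPP : isPP m Q O)
    {γ : Fin n} (hγ : (γ : ℕ) = m) {B : Finset (Fin n)} (hBO : B ∈ O)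
    {t : Fin n} (htB : t ∈ B) (htmax : ∀ j ∈ B, j ≤ t) {j l : Fin n} (hjl : arc Q j l)
    {O' : Finset (Finset (Fin n))}
    (hO' : O' = insert (insert γ B) (O.erase B) ∨ O' = O.erase B) :
    covered (insert (insert γ B) (Q.erase B)) O' j l ↔ covered Q O j l := by
  have hBQ : B ∈ Q := hPP.2.2.2.2 hBO
  have hj : (j : ℕ) < m := (arc_lt hPP hjl).1
  have hl : (l : ℕ) < m := (arc_lt hPP hjl).2
  have hlγ : l < γ := Fin.lt_def.mpr (by omega)
  constructor
  · rintro (⟨a, b, hab, haj, hlb⟩ | ⟨C, hC, hCj⟩)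
    · rcases (arc_extend_iff hPP hγ hBQ htB htmax a b).mp hab with hab' | ⟨rfl, rfl⟩
      · exact Or.inl ⟨a, b, hab', haj, hlb⟩
      · exact Or.inr ⟨B, hBO, fun i hi => lt_of_le_of_lt (htmax i hi) haj⟩
    · rcases hO' with rfl | rfl
      · rcases Finset.mem_insert.mp hC with rfl | hCO
        · have h1 : (γ : ℕ) < (j : ℕ) := Fin.lt_def.mp (hCj γ (Finset.mem_insert_self _ _))
          omega
        · exact Or.inr ⟨C, Finset.mem_of_mem_erase hCO, hCj⟩
      · exact Or.inr ⟨C, Finset.mem_of_mem_erase hC, hCj⟩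
  · rintro (⟨a, b, hab, haj, hlb⟩ | ⟨C, hC, hCj⟩)
    · exact Or.inl ⟨a, b, (arc_extend_iff hPP hγ hBQ htB htmax a b).mpr (Or.inl hab),
        haj, hlb⟩
    · by_cases hCB : C = B
      · subst hCB
        exact Or.inl ⟨t, γ, (arc_extend_iff hPP hγ hBQ htB htmax t γ).mpr
          (Or.inr ⟨rfl, rfl⟩), hCj t htB, hlγ⟩
      · rcases hO' with rfl | rfl
        · exact Or.inr ⟨C, Finset.mem_insert_of_mem (Finset.mem_erase.mpr ⟨hCB, hC⟩), hCj⟩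
        · exact Or.inr ⟨C, Finset.mem_erase.mpr ⟨hCB, hC⟩, hCj⟩

lemma covered_newarc_iff {m : ℕ} {Q O : Finset (Finset (Fin n))} (hPP : isPP m Q O)
    {γ : Fin n} (hγ : (γ : ℕ) = m) {B : Finset (Fin n)} (hBO : B ∈ O)
    {t : Fin n} (htB : t ∈ B) (htmax : ∀ j ∈ B, j ≤ t)
    {O' : Finset (Finset (Fin n))}
    (hO' : O' = insert (insert γ B) (O.erase B) ∨ O' = O.erase B) :
    covered (insert (insert γ B) (Q.erase B)) O' t γ ↔ wcond B O := by
  have hBQ : B ∈ Q := hPP.2.2.2.2 hBO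
  have htm : (t : ℕ) < m := mem_block_lt hPP hBQ htB
  rw [wcond_iff_max htB htmax]
  constructor
  · rintro (⟨a, b, hab, hat, hγb⟩ | ⟨C, hC, hCt⟩)
    · rcases (arc_extend_iff hPP hγ hBQ htB htmax a b).mp hab with hab' | ⟨rfl, rfl⟩
      · have h1 : (b : ℕ) < m := (arc_lt hPP hab').2
        have h2 : (γ : ℕ) < (b : ℕ) := Fin.lt_def.mp hγb
        omega
      · exact absurd hγb (lt_irrefl _)
    · rcases hO' with rfl | rfl
      · rcases Finset.mem_insert.mp hC with rfl | hCO
        · have h1 : (γ : ℕ) < (t : ℕ) := Fin.lt_def.mp (hCt γ (Finset.mem_insert_self _ _))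
          omega
        · exact ⟨C, hCO, hCt⟩
      · exact ⟨C, hC, hCt⟩
  · rintro ⟨C, hC, hCt⟩
    rcases hO' with rfl | rfl
    · exact Or.inr ⟨C, Finset.mem_insert_of_mem hC, hCt⟩
    · exact Or.inr ⟨C, hC, hCt⟩

open Classical in
lemma nY_nV_extend {m : ℕ} {Q O : Finset (Finset (Fin n))} (hPP : isPP m Q O)
    {γ : Fin n} (hγ : (γ : ℕ) = m) {B : Finset (Fin n)} (hBO : B ∈ O)
    {t : Fin n} (htB : t ∈ B) (htmax : ∀ j ∈ B, j ≤ t)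
    {O' : Finset (Finset (Fin n))}
    (hO' : O' = insert (insert γ B) (O.erase B) ∨ O' = O.erase B) :
    nY (insert (insert γ B) (Q.erase B)) O' = nY Q O + (if wcond B O then 0 else 1) ∧
    nV (insert (insert γ B) (Q.erase B)) O' = nV Q O + (if wcond B O then 1 else 0) := by
  have hBQ : B ∈ Q := hPP.2.2.2.2 hBO
  have hdisj := hPP.2.2.2.1
  have htarc : ¬ ∃ l, arc Q t l := no_arc_of_max hdisj hBQ htB htmax
  have harc := arc_extend_iff hPP hγ hBQ htB htmax
  have hnew := covered_newarc_iff hPP hγ hBO htB htmax hO'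
  have hYmem : ∀ i : Fin n,
      ((∃ l, arc (insert (insert γ B) (Q.erase B)) i l ∧
          ¬ covered (insert (insert γ B) (Q.erase B)) O' i l) ↔
        ((∃ l, arc Q i l ∧ ¬ covered Q O i l) ∨ (i = t ∧ ¬ wcond B O))) := by
    intro i
    constructor
    · rintro ⟨l, hal, hnc⟩
      rcases (harc i l).mp hal with hal' | ⟨rfl, rfl⟩
      · exact Or.inl ⟨l, hal', fun hc =>
          hnc ((covered_extend_iff hPP hγ hBO htB htmax hal' hO').mpr hc)⟩
      · exact Or.inr ⟨rfl, fun hc => hnc (hnew.mpr hc)⟩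
    · rintro (⟨l, hal, hnc⟩ | ⟨rfl, hnw⟩)
      · exact ⟨l, (harc i l).mpr (Or.inl hal), fun hc =>
          hnc ((covered_extend_iff hPP hγ hBO htB htmax hal hO').mp hc)⟩
      · exact ⟨γ, (harc i γ).mpr (Or.inr ⟨rfl, rfl⟩), fun hc => hnw (hnew.mp hc)⟩
  have hVmem : ∀ i : Fin n,
      ((∃ l, arc (insert (insert γ B) (Q.erase B)) i l ∧
          covered (insert (insert γ B) (Q.erase B)) O' i l) ↔
        ((∃ l, arc Q i l ∧ covered Q O i l) ∨ (i = t ∧ wcond B O))) := by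
    intro i
    constructor
    · rintro ⟨l, hal, hc⟩
      rcases (harc i l).mp hal with hal' | ⟨rfl, rfl⟩
      · exact Or.inl ⟨l, hal',
          (covered_extend_iff hPP hγ hBO htB htmax hal' hO').mp hc⟩
      · exact Or.inr ⟨rfl, hnew.mp hc⟩
    · rintro (⟨l, hal, hc⟩ | ⟨rfl, hw⟩)
      · exact ⟨l, (harc i l).mpr (Or.inl hal),
          (covered_extend_iff hPP hγ hBO htB htmax hal hO').mpr hc⟩
      · exact ⟨γ, (harc i γ).mpr (Or.inr ⟨rfl, rfl⟩), hnew.mpr hw⟩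
  have htY : t ∉ Finset.univ.filter fun i : Fin n => ∃ l, arc Q i l ∧ ¬ covered Q O i l := by
    rw [Finset.mem_filter]
    rintro ⟨-, l, hal, -⟩
    exact htarc ⟨l, hal⟩
  have htV : t ∉ Finset.univ.filter fun i : Fin n => ∃ l, arc Q i l ∧ covered Q O i l := by
    rw [Finset.mem_filter]
    rintro ⟨-, l, hal, -⟩
    exact htarc ⟨l, hal⟩
  by_cases hw : wcond B O
  · constructor
    · rw [nY, nY, if_pos hw, add_zero]
      congr 1
      ext i
      rw [Finset.mem_filter, Finset.mem_filter, hYmem i]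
      constructor
      · rintro ⟨hu, h | ⟨-, hnw⟩⟩
        · exact ⟨hu, h⟩
        · exact absurd hw hnw
      · rintro ⟨hu, h⟩
        exact ⟨hu, Or.inl h⟩
    · rw [nV, nV, if_pos hw]
      have : (Finset.univ.filter fun i : Fin n =>
          ∃ l, arc (insert (insert γ B) (Q.erase B)) i l ∧
            covered (insert (insert γ B) (Q.erase B)) O' i l) =
          insert t (Finset.univ.filter fun i : Fin n => ∃ l, arc Q i l ∧ covered Q O i l) := by
        ext i
        rw [Finset.mem_insert, Finset.mem_filter, Finset.mem_filter, hVmem i]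
        constructor
        · rintro ⟨hu, h | ⟨rfl, -⟩⟩
          · exact Or.inr ⟨hu, h⟩
          · exact Or.inl rfl
        · rintro (rfl | ⟨hu, h⟩)
          · exact ⟨Finset.mem_univ _, Or.inr ⟨rfl, hw⟩⟩
          · exact ⟨hu, Or.inl h⟩
      rw [this, Finset.card_insert_of_notMem htV]
  · constructor
    · rw [nY, nY, if_neg hw]
      have : (Finset.univ.filter fun i : Fin n =>
          ∃ l, arc (insert (insert γ B) (Q.erase B)) i l ∧
            ¬ covered (insert (insert γ B) (Q.erase B)) O' i l) =
          insert t (Finset.univ.filter fun i : Fin n => ∃ l, arc Q i l ∧ ¬ covered Q O i l) := by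
        ext i
        rw [Finset.mem_insert, Finset.mem_filter, Finset.mem_filter, hYmem i]
        constructor
        · rintro ⟨hu, h | ⟨rfl, -⟩⟩
          · exact Or.inr ⟨hu, h⟩
          · exact Or.inl rfl
        · rintro (rfl | ⟨hu, h⟩)
          · exact ⟨Finset.mem_univ _, Or.inr ⟨rfl, hw⟩⟩
          · exact ⟨hu, Or.inl h⟩
      rw [this, Finset.card_insert_of_notMem htY]
    · rw [nV, nV, if_neg hw, add_zero]
      congr 1
      ext i
      rw [Finset.mem_filter, Finset.mem_filter, hVmem i]
      constructor
      · rintro ⟨hu, h | ⟨-, hw'⟩⟩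
        · exact ⟨hu, h⟩
        · exact absurd hw' hw
      · rintro ⟨hu, h⟩
        exact ⟨hu, Or.inl h⟩

lemma pwt_extend (x y v : R) {m : ℕ} {Q O : Finset (Finset (Fin n))} (hPP : isPP m Q O)
    {γ : Fin n} (hγ : (γ : ℕ) = m) {B : Finset (Fin n)} (hBO : B ∈ O)
    {t : Fin n} (htB : t ∈ B) (htmax : ∀ j ∈ B, j ≤ t)
    {O' : Finset (Finset (Fin n))}
    (hO' : O' = insert (insert γ B) (O.erase B) ∨ O' = O.erase B) :
    pwt x y v (insert (insert γ B) (Q.erase B)) O' = wgt y v B O * pwt x y v Q O := by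
  have hBQ : B ∈ Q := hPP.2.2.2.2 hBO
  obtain ⟨hY, hV⟩ := nY_nV_extend hPP hγ hBO htB htmax hO'
  have hcard : (insert (insert γ B) (Q.erase B)).card = Q.card := by
    rw [Finset.card_insert_of_notMem, Finset.card_erase_of_mem hBQ]
    · have : 1 ≤ Q.card := Finset.card_pos.mpr ⟨B, hBQ⟩
      omega
    · intro hc
      have := mem_block_lt hPP (Finset.mem_of_mem_erase hc) (Finset.mem_insert_self γ B)
      omega
  rw [pwt, pwt, hY, hV, hcard, wgt]
  by_cases hw : wcond B O
  · rw [if_pos hw, if_pos hw, if_pos hw, add_zero, pow_succ]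
    ring
  · rw [if_neg hw, if_neg hw, if_neg hw, add_zero, pow_succ]
    ring

lemma isPP_extend {m : ℕ} {Q O : Finset (Finset (Fin n))} (hPP : isPP m Q O)
    {γ : Fin n} (hγ : (γ : ℕ) = m) {B : Finset (Fin n)} (hBO : B ∈ O)
    {O' : Finset (Finset (Fin n))}
    (hO' : O' = insert (insert γ B) (O.erase B) ∨ O' = O.erase B) :
    isPP (m + 1) (insert (insert γ B) (Q.erase B)) O' := by
  obtain ⟨h1, h2, h3, h4, h5⟩ := hPP
  have hBQ : B ∈ Q := h5 hBO
  have key : ∀ E, E ∈ Q.erase B → ∀ i, i ∈ E → i ∈ insert γ B → False := by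
    intro E hE i hiE hins
    rcases Finset.mem_insert.mp hins with rfl | hiB
    · exact not_mem_block ⟨h1, h2, h3, h4, h5⟩ hγ (Finset.mem_of_mem_erase hE) hiE
    · exact (Finset.ne_of_mem_erase hE) (h4 E (Finset.mem_of_mem_erase hE) B hBQ i hiE hiB)
  refine ⟨?_, ?_, ?_, ?_, ?_⟩
  · intro C hC
    rcases Finset.mem_insert.mp hC with rfl | h
    · exact ⟨γ, Finset.mem_insert_self _ _⟩
    · exact h1 C (Finset.mem_of_mem_erase h)
  · intro C hC i hiC
    rcases Finset.mem_insert.mp hC with rfl | h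
    · rcases Finset.mem_insert.mp hiC with rfl | hiB
      · omega
      · have := h2 B hBQ i hiB; omega
    · have := h2 C (Finset.mem_of_mem_erase h) i hiC; omega
  · intro i hi
    by_cases him : (i : ℕ) < m
    · obtain ⟨C, hC, hiC⟩ := h3 i him
      by_cases hCB : C = B
      · subst hCB
        exact ⟨insert γ C, Finset.mem_insert_self _ _, Finset.mem_insert_of_mem hiC⟩
      · exact ⟨C, Finset.mem_insert_of_mem (Finset.mem_erase.mpr ⟨hCB, hC⟩), hiC⟩
    · have hieq : i = γ := Fin.ext (by omega)
      rw [hieq]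
      exact ⟨insert γ B, Finset.mem_insert_self _ _, Finset.mem_insert_self _ _⟩
  · intro C hC D hD i hiC hiD
    rcases Finset.mem_insert.mp hC with rfl | hCQ <;> rcases Finset.mem_insert.mp hD with h' | h'
    · rw [h']
    · exact (key D h' i hiD hiC).elim
    · exact (key C hCQ i hiC (h' ▸ hiD)).elim
    · exact h4 C (Finset.mem_of_mem_erase hCQ) D (Finset.mem_of_mem_erase h') i hiC hiD
  · rcases hO' with rfl | rfl
    · exact Finset.insert_subset_insert _ (Finset.erase_subset_erase _ h5)
    · exact (Finset.erase_subset_erase _ h5).trans (Finset.subset_insert _ _)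

open Classical in
noncomputable def blockOf (Q : Finset (Finset (Fin n))) (i : Fin n) : Finset (Fin n) :=
  (Q.filter (fun B => i ∈ B)).sup id

lemma blockOf_eq {Q : Finset (Finset (Fin n))}
    (hdisj : ∀ B ∈ Q, ∀ C ∈ Q, ∀ i : Fin n, i ∈ B → i ∈ C → B = C)
    {B : Finset (Fin n)} {i : Fin n} (hB : B ∈ Q) (hiB : i ∈ B) : blockOf Q i = B := by
  classical
  unfold blockOf
  apply le_antisymm
  · apply Finset.sup_le
    intro C hC
    rw [Finset.mem_filter] at hC
    exact le_of_eq (hdisj C hC.1 B hB i hC.2 hiB)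
  · exact Finset.le_sup (f := id) (Finset.mem_filter.mpr ⟨hB, hiB⟩)

lemma erase_nonempty_of_ne_singleton {B' : Finset (Fin n)} {γ : Fin n}
    (hγB' : γ ∈ B') (hne : B' ≠ {γ}) : (B'.erase γ).Nonempty := by
  by_contra hc
  rw [Finset.not_nonempty_iff_eq_empty] at hc
  apply hne
  ext x
  rw [Finset.mem_singleton]
  constructor
  · intro hx
    by_contra hxγ
    have : x ∈ B'.erase γ := Finset.mem_erase.mpr ⟨hxγ, hx⟩
    rw [hc] at this
    exact absurd this (Finset.notMem_empty x)
  · rintro rfl; exact hγB'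

lemma unextend_facts {m : ℕ} {Q' O' : Finset (Finset (Fin n))}
    (hPP' : isPP (m + 1) Q' O') {γ : Fin n} (hγ : (γ : ℕ) = m)
    {B' : Finset (Fin n)} (hB'Q : B' ∈ Q') (hγB' : γ ∈ B') (hne : B' ≠ {γ}) :
    ((B'.erase γ).Nonempty ∧ (∀ i ∈ B'.erase γ, (i : ℕ) < m)) ∧
      B'.erase γ ∉ Q'.erase B' ∧
      (∀ C ∈ Q'.erase B', γ ∉ C) := by
  obtain ⟨h1, h2, h3, h4, h5⟩ := hPP'
  have hBne := erase_nonempty_of_ne_singleton hγB' hne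
  have hbound : ∀ i ∈ B'.erase γ, (i : ℕ) < m := by
    intro i hi
    rw [Finset.mem_erase] at hi
    have h := h2 B' hB'Q i hi.2
    have : (i : ℕ) ≠ m := fun hc => hi.1 (Fin.ext (by omega))
    omega
  refine ⟨⟨hBne, hbound⟩, ?_, ?_⟩
  · intro hc
    obtain ⟨x, hx⟩ := hBne
    have hxB' : x ∈ B' := Finset.mem_of_mem_erase hx
    have := h4 (B'.erase γ) (Finset.mem_of_mem_erase hc) B' hB'Q x hx hxB'
    exact (Finset.ne_of_mem_erase hc) this
  · intro C hC hγC
    exact (Finset.ne_of_mem_erase hC)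
      (h4 C (Finset.mem_of_mem_erase hC) B' hB'Q γ hγC hγB')

lemma isPP_unextend {m : ℕ} {Q' O' : Finset (Finset (Fin n))}
    (hPP' : isPP (m + 1) Q' O') {γ : Fin n} (hγ : (γ : ℕ) = m)
    {B' : Finset (Fin n)} (hB'Q : B' ∈ Q') (hγB' : γ ∈ B') (hne : B' ≠ {γ})
    {O₀ : Finset (Finset (Fin n))}
    (hO₀ : O₀ = insert (B'.erase γ) (O'.erase B') ∨ (B' ∉ O' ∧ O₀ = insert (B'.erase γ) O')) :
    isPP m (insert (B'.erase γ) (Q'.erase B')) O₀ := by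
  obtain ⟨⟨hBne, hbound⟩, hnotin, hγnot⟩ := unextend_facts hPP' hγ hB'Q hγB' hne
  obtain ⟨h1, h2, h3, h4, h5⟩ := hPP'
  refine ⟨?_, ?_, ?_, ?_, ?_⟩
  · intro C hC
    rcases Finset.mem_insert.mp hC with rfl | h
    · exact hBne
    · exact h1 C (Finset.mem_of_mem_erase h)
  · intro C hC i hiC
    rcases Finset.mem_insert.mp hC with rfl | h
    · exact hbound i hiC
    · have hlt := h2 C (Finset.mem_of_mem_erase h) i hiC
      have : i ≠ γ := fun hc => hγnot C h (hc ▸ hiC)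
      have : (i : ℕ) ≠ m := fun hc => this (Fin.ext (by omega))
      omega
  · intro i hi
    obtain ⟨C, hC, hiC⟩ := h3 i (by omega)
    by_cases hCB : C = B'
    · have hiB' : i ∈ B' := hCB ▸ hiC
      have hiγ : i ≠ γ := fun hc => by rw [hc] at hi; omega
      exact ⟨B'.erase γ, Finset.mem_insert_self _ _, Finset.mem_erase.mpr ⟨hiγ, hiB'⟩⟩
    · exact ⟨C, Finset.mem_insert_of_mem (Finset.mem_erase.mpr ⟨hCB, hC⟩), hiC⟩
  · intro C hC D hD i hiC hiD
    have key : ∀ E, E ∈ Q'.erase B' → i ∈ E → i ∈ B'.erase γ → False := by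
      intro E hE hiE hiB
      exact (Finset.ne_of_mem_erase hE)
        (h4 E (Finset.mem_of_mem_erase hE) B' hB'Q i hiE (Finset.mem_of_mem_erase hiB))
    rcases Finset.mem_insert.mp hC with rfl | hCQ <;> rcases Finset.mem_insert.mp hD with h' | h'
    · rw [h']
    · exact (key D h' hiD hiC).elim
    · exact (key C hCQ hiC (h' ▸ hiD)).elim
    · exact h4 C (Finset.mem_of_mem_erase hCQ) D (Finset.mem_of_mem_erase h') i hiC hiD
  · rcases hO₀ with rfl | ⟨hB'O, rfl⟩
    · exact Finset.insert_subset_insert _ (Finset.erase_subset_erase _ h5)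
    · refine Finset.insert_subset_insert _ ?_
      intro C hC
      exact Finset.mem_erase.mpr ⟨fun hc => hB'O (hc ▸ hC), h5 hC⟩

open Classical in
lemma sumA (x y v : R) {m : ℕ} {γ : Fin n} (hγ : (γ : ℕ) = m) (h' : ℕ) :
    ∑ p ∈ (ppSet n (m + 1) h').filter (fun p => {γ} ∈ p.1 ∧ {γ} ∉ p.2),
      pwt x y v p.1 p.2 = x * PPsum x y v n m h' := by
  rw [PPsum, Finset.mul_sum]
  refine Finset.sum_nbij' (fun p => (p.1.erase {γ}, p.2))
    (fun p => (insert {γ} p.1, p.2)) ?_ ?_ ?_ ?_ ?_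
  · intro p hp
    rw [Finset.mem_filter, mem_ppSet] at hp
    obtain ⟨⟨hPP', hcard⟩, hγQ, hγO⟩ := hp
    refine mem_ppSet.mpr ⟨?_, hcard⟩
    have h := isPP_erase_singleton hPP' hγ hγQ
    rwa [Finset.erase_eq_of_notMem hγO] at h
  · intro p hp
    rw [mem_ppSet] at hp
    refine Finset.mem_filter.mpr ⟨mem_ppSet.mpr
      ⟨isPP_insert_singleton hp.1 hγ (Or.inl rfl), hp.2⟩,
      Finset.mem_insert_self _ _, ?_⟩
    exact fun hc => singleton_not_mem hp.1 hγ (hp.1.2.2.2.2 hc)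
  · intro p hp
    rw [Finset.mem_filter] at hp
    exact Prod.ext (Finset.insert_erase hp.2.1) rfl
  · intro p hp
    rw [mem_ppSet] at hp
    exact Prod.ext (Finset.erase_insert (singleton_not_mem hp.1 hγ)) rfl
  · intro p hp
    rw [Finset.mem_filter, mem_ppSet] at hp
    obtain ⟨⟨hPP', hcard⟩, hγQ, hγO⟩ := hp
    have hPPm : isPP m (p.1.erase {γ}) p.2 := by
      have h := isPP_erase_singleton hPP' hγ hγQ
      rwa [Finset.erase_eq_of_notMem hγO] at h
    have h := pwt_insert_singleton x y v hPPm hγ (Or.inl rfl)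
    rwa [Finset.insert_erase hγQ] at h

open Classical in
lemma sumB (x y v : R) {m : ℕ} {γ : Fin n} (hγ : (γ : ℕ) = m) (h' : ℕ) :
    ∑ p ∈ (ppSet n (m + 1) (h' + 1)).filter (fun p => {γ} ∈ p.2),
      pwt x y v p.1 p.2 = x * PPsum x y v n m h' := by
  rw [PPsum, Finset.mul_sum]
  refine Finset.sum_nbij' (fun p => (p.1.erase {γ}, p.2.erase {γ}))
    (fun p => (insert {γ} p.1, insert {γ} p.2)) ?_ ?_ ?_ ?_ ?_
  · intro p hp
    rw [Finset.mem_filter, mem_ppSet] at hp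
    obtain ⟨⟨hPP', hcard⟩, hγO⟩ := hp
    have hγQ : {γ} ∈ p.1 := hPP'.2.2.2.2 hγO
    refine mem_ppSet.mpr ⟨isPP_erase_singleton hPP' hγ hγQ, ?_⟩
    rw [Finset.card_erase_of_mem hγO, hcard]
    omega
  · intro p hp
    rw [mem_ppSet] at hp
    have hγO : {γ} ∉ p.2 := fun hc => singleton_not_mem hp.1 hγ (hp.1.2.2.2.2 hc)
    refine Finset.mem_filter.mpr ⟨mem_ppSet.mpr
      ⟨isPP_insert_singleton hp.1 hγ (Or.inr rfl), ?_⟩, Finset.mem_insert_self _ _⟩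
    rw [Finset.card_insert_of_notMem hγO, hp.2]
  · intro p hp
    rw [Finset.mem_filter, mem_ppSet] at hp
    obtain ⟨⟨hPP', hcard⟩, hγO⟩ := hp
    have hγQ : {γ} ∈ p.1 := hPP'.2.2.2.2 hγO
    exact Prod.ext (Finset.insert_erase hγQ) (Finset.insert_erase hγO)
  · intro p hp
    rw [mem_ppSet] at hp
    have hγQ : {γ} ∉ p.1 := singleton_not_mem hp.1 hγ
    have hγO : {γ} ∉ p.2 := fun hc => hγQ (hp.1.2.2.2.2 hc)
    exact Prod.ext (Finset.erase_insert hγQ) (Finset.erase_insert hγO)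
  · intro p hp
    rw [Finset.mem_filter, mem_ppSet] at hp
    obtain ⟨⟨hPP', hcard⟩, hγO⟩ := hp
    have hγQ : {γ} ∈ p.1 := hPP'.2.2.2.2 hγO
    have hPPm : isPP m (p.1.erase {γ}) (p.2.erase {γ}) := isPP_erase_singleton hPP' hγ hγQ
    have h := pwt_insert_singleton x y v hPPm hγ (Or.inr rfl)
    rwa [Finset.insert_erase hγQ, Finset.insert_erase hγO] at h

open Classical in
lemma sumB_empty (x y v : R) {m : ℕ} {γ : Fin n} (hγ : (γ : ℕ) = m) :
    ∑ p ∈ (ppSet n (m + 1) 0).filter (fun p => {γ} ∈ p.2),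
      pwt x y v p.1 p.2 = 0 := by
  apply Finset.sum_eq_zero
  intro p hp
  rw [Finset.mem_filter, mem_ppSet] at hp
  rw [Finset.card_eq_zero.mp hp.1.2] at hp
  exact absurd hp.2 (Finset.notMem_empty _)

open Classical in
lemma sumC1_empty (x y v : R) {m : ℕ} {γ : Fin n} (hγ : (γ : ℕ) = m) :
    ∑ p ∈ (ppSet n (m + 1) 0).filter (fun p => ∃ B ∈ p.2, γ ∈ B ∧ B ≠ {γ}),
      pwt x y v p.1 p.2 = 0 := by
  apply Finset.sum_eq_zero
  intro p hp
  rw [Finset.mem_filter, mem_ppSet] at hp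
  obtain ⟨⟨-, hcard⟩, B, hB, -⟩ := hp
  rw [Finset.card_eq_zero.mp hcard] at hB
  exact absurd hB (Finset.notMem_empty _)

open Classical in
lemma sumC1 (x y v : R) {m : ℕ} {γ : Fin n} (hγ : (γ : ℕ) = m) (h' : ℕ) :
    ∑ p ∈ (ppSet n (m + 1) (h' + 1)).filter (fun p => ∃ B ∈ p.2, γ ∈ B ∧ B ≠ {γ}),
      pwt x y v p.1 p.2 = (y + (h' : R) * v) * PPsum x y v n m (h' + 1) := by
  have key : (∑ p ∈ (ppSet n (m + 1) (h' + 1)).filter (fun p => ∃ B ∈ p.2, γ ∈ B ∧ B ≠ {γ}),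
      pwt x y v p.1 p.2)
      = ∑ q ∈ (ppSet n m (h' + 1)).sigma (fun p => p.2),
          wgt y v q.2 q.1.2 * pwt x y v q.1.1 q.1.2 := by
    refine Finset.sum_nbij'
      (fun p => ⟨(insert ((blockOf p.1 γ).erase γ) (p.1.erase (blockOf p.1 γ)),
                  insert ((blockOf p.1 γ).erase γ) (p.2.erase (blockOf p.1 γ))),
                 (blockOf p.1 γ).erase γ⟩)
      (fun q => (insert (insert γ q.2) (q.1.1.erase q.2),
                 insert (insert γ q.2) (q.1.2.erase q.2))) ?_ ?_ ?_ ?_ ?_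
    · -- forward membership
      intro p hp
      rw [Finset.mem_filter, mem_ppSet] at hp
      obtain ⟨⟨hPP', hcard⟩, B', hB'O, hγB', hBne'⟩ := hp
      have hB'Q : B' ∈ p.1 := hPP'.2.2.2.2 hB'O
      have hblk : blockOf p.1 γ = B' := blockOf_eq hPP'.2.2.2.1 hB'Q hγB'
      rw [Finset.mem_sigma]
      constructor
      · rw [mem_ppSet, hblk]
        refine ⟨isPP_unextend hPP' hγ hB'Q hγB' hBne' (Or.inl rfl), ?_⟩
        have hBnotO : B'.erase γ ∉ p.2.erase B' := by
          intro hc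
          exact (unextend_facts hPP' hγ hB'Q hγB' hBne').2.1
            (Finset.erase_subset_erase _ hPP'.2.2.2.2 hc)
        rw [Finset.card_insert_of_notMem hBnotO, Finset.card_erase_of_mem hB'O, hcard]
        omega
      · rw [hblk]
        exact Finset.mem_insert_self _ _
    · -- inverse membership
      rintro ⟨⟨Q, O⟩, B⟩ hq
      dsimp only
      rw [Finset.mem_sigma, mem_ppSet] at hq
      obtain ⟨⟨hPPm, hcard⟩, hBO⟩ := hq
      have hBQ : B ∈ Q := hPPm.2.2.2.2 hBO
      have hγB : γ ∉ B := not_mem_block hPPm hγ hBQ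
      have hgBnotO : insert γ B ∉ O.erase B := fun hc =>
        not_mem_block hPPm hγ (hPPm.2.2.2.2 (Finset.mem_of_mem_erase hc))
          (Finset.mem_insert_self _ _)
      rw [Finset.mem_filter, mem_ppSet]
      refine ⟨⟨isPP_extend hPPm hγ hBO (Or.inl rfl), ?_⟩,
        insert γ B, Finset.mem_insert_self _ _, Finset.mem_insert_self _ _, ?_⟩
      · rw [Finset.card_insert_of_notMem hgBnotO, Finset.card_erase_of_mem hBO, hcard]
        omega
      · intro hc
        obtain ⟨b, hb⟩ := hPPm.1 B hBQ
        have hbγ : b ≠ γ := fun hbc => hγB (hbc ▸ hb)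
        have : b ∈ ({γ} : Finset (Fin n)) := hc ▸ Finset.mem_insert_of_mem hb
        exact hbγ (Finset.mem_singleton.mp this)
    · -- left inverse
      intro p hp
      dsimp only
      rw [Finset.mem_filter, mem_ppSet] at hp
      obtain ⟨⟨hPP', hcard⟩, B', hB'O, hγB', hBne'⟩ := hp
      have hB'Q : B' ∈ p.1 := hPP'.2.2.2.2 hB'O
      have hblk : blockOf p.1 γ = B' := blockOf_eq hPP'.2.2.2.1 hB'Q hγB'
      have hfacts := unextend_facts hPP' hγ hB'Q hγB' hBne'
      have hBnotO : B'.erase γ ∉ p.2.erase B' := fun hc =>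
        hfacts.2.1 (Finset.erase_subset_erase _ hPP'.2.2.2.2 hc)
      simp only [hblk]
      refine Prod.ext ?_ ?_
      · show insert (insert γ (B'.erase γ))
          ((insert (B'.erase γ) (p.1.erase B')).erase (B'.erase γ)) = p.1
        rw [Finset.erase_insert hfacts.2.1, Finset.insert_erase hγB',
          Finset.insert_erase hB'Q]
      · show insert (insert γ (B'.erase γ))
          ((insert (B'.erase γ) (p.2.erase B')).erase (B'.erase γ)) = p.2
        rw [Finset.erase_insert hBnotO, Finset.insert_erase hγB',
          Finset.insert_erase hB'O]
    · -- right inverse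
      rintro ⟨⟨Q, O⟩, B⟩ hq
      dsimp only
      rw [Finset.mem_sigma, mem_ppSet] at hq
      obtain ⟨⟨hPPm, hcard⟩, hBO⟩ := hq
      have hBQ : B ∈ Q := hPPm.2.2.2.2 hBO
      have hγB : γ ∉ B := not_mem_block hPPm hγ hBQ
      have hext := isPP_extend hPPm hγ hBO (Or.inl rfl)
      have hblk : blockOf (insert (insert γ B) (Q.erase B)) γ = insert γ B :=
        blockOf_eq hext.2.2.2.1 (Finset.mem_insert_self _ _) (Finset.mem_insert_self _ _)
      have hQnot : insert γ B ∉ Q.erase B := fun hc =>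
        not_mem_block hPPm hγ (Finset.mem_of_mem_erase hc) (Finset.mem_insert_self _ _)
      have hOnot : insert γ B ∉ O.erase B := fun hc =>
        not_mem_block hPPm hγ (hPPm.2.2.2.2 (Finset.mem_of_mem_erase hc))
          (Finset.mem_insert_self _ _)
      simp only [hblk, Finset.erase_insert hγB]
      refine Sigma.ext ?_ (heq_of_eq ?_)
      · refine Prod.ext ?_ ?_
        · show insert B ((insert (insert γ B) (Q.erase B)).erase (insert γ B)) = Q
          rw [Finset.erase_insert hQnot, Finset.insert_erase hBQ]
        · show insert B ((insert (insert γ B) (O.erase B)).erase (insert γ B)) = O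
          rw [Finset.erase_insert hOnot, Finset.insert_erase hBO]
      · rfl
    · -- weights
      intro p hp
      dsimp only
      rw [Finset.mem_filter, mem_ppSet] at hp
      obtain ⟨⟨hPP', hcard⟩, B', hB'O, hγB', hBne'⟩ := hp
      have hB'Q : B' ∈ p.1 := hPP'.2.2.2.2 hB'O
      have hblk : blockOf p.1 γ = B' := blockOf_eq hPP'.2.2.2.1 hB'Q hγB'
      have hfacts := unextend_facts hPP' hγ hB'Q hγB' hBne'
      have hBne : (B'.erase γ).Nonempty := hfacts.1.1
      have hBnotO : B'.erase γ ∉ p.2.erase B' := fun hc =>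
        hfacts.2.1 (Finset.erase_subset_erase _ hPP'.2.2.2.2 hc)
      have hPPm : isPP m (insert (B'.erase γ) (p.1.erase B'))
          (insert (B'.erase γ) (p.2.erase B')) :=
        isPP_unextend hPP' hγ hB'Q hγB' hBne' (Or.inl rfl)
      have h := pwt_extend x y v hPPm hγ (Finset.mem_insert_self _ _)
        (Finset.max'_mem _ hBne) (fun j hj => Finset.le_max' _ j hj) (Or.inl rfl)
      rw [Finset.erase_insert hfacts.2.1, Finset.erase_insert hBnotO,
        Finset.insert_erase hγB', Finset.insert_erase hB'Q, Finset.insert_erase hB'O] at h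
      simp only [hblk]
      exact h
  rw [key, Finset.sum_sigma, PPsum, Finset.mul_sum]
  refine Finset.sum_congr rfl fun p hp => ?_
  dsimp only
  rw [← Finset.sum_mul]
  rw [mem_ppSet] at hp
  obtain ⟨hPPm, hcard⟩ := hp
  have hsum := sum_wgt y v (O := p.2)
    (fun B hB => hPPm.1 B (hPPm.2.2.2.2 hB))
    (fun B hB C hC i hiB hiC =>
      hPPm.2.2.2.1 B (hPPm.2.2.2.2 hB) C (hPPm.2.2.2.2 hC) i hiB hiC)
    (Finset.card_pos.mp (by omega))
  rw [hsum, hcard]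
  norm_num

open Classical in
lemma sumC2 (x y v : R) {m : ℕ} {γ : Fin n} (hγ : (γ : ℕ) = m) (h' : ℕ) :
    ∑ p ∈ (ppSet n (m + 1) h').filter (fun p => ∃ B ∈ p.1, γ ∈ B ∧ B ≠ {γ} ∧ B ∉ p.2),
      pwt x y v p.1 p.2 = (y + (h' : R) * v) * PPsum x y v n m (h' + 1) := by
  have key : (∑ p ∈ (ppSet n (m + 1) h').filter
        (fun p => ∃ B ∈ p.1, γ ∈ B ∧ B ≠ {γ} ∧ B ∉ p.2), pwt x y v p.1 p.2)
      = ∑ q ∈ (ppSet n m (h' + 1)).sigma (fun p => p.2),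
          wgt y v q.2 q.1.2 * pwt x y v q.1.1 q.1.2 := by
    refine Finset.sum_nbij'
      (fun p => ⟨(insert ((blockOf p.1 γ).erase γ) (p.1.erase (blockOf p.1 γ)),
                  insert ((blockOf p.1 γ).erase γ) p.2),
                 (blockOf p.1 γ).erase γ⟩)
      (fun q => (insert (insert γ q.2) (q.1.1.erase q.2), q.1.2.erase q.2)) ?_ ?_ ?_ ?_ ?_
    · intro p hp
      rw [Finset.mem_filter, mem_ppSet] at hp
      obtain ⟨⟨hPP', hcard⟩, B', hB'Q, hγB', hBne', hB'O⟩ := hp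
      have hblk : blockOf p.1 γ = B' := blockOf_eq hPP'.2.2.2.1 hB'Q hγB'
      have hfacts := unextend_facts hPP' hγ hB'Q hγB' hBne'
      have hBnotO : B'.erase γ ∉ p.2 := by
        intro hc
        refine hfacts.2.1 (Finset.mem_erase.mpr ⟨?_, hPP'.2.2.2.2 hc⟩)
        intro hBB
        exact (hBB ▸ Finset.notMem_erase γ B') hγB'
      rw [Finset.mem_sigma]
      constructor
      · rw [mem_ppSet, hblk]
        refine ⟨isPP_unextend hPP' hγ hB'Q hγB' hBne' (Or.inr ⟨hB'O, rfl⟩), ?_⟩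
        rw [Finset.card_insert_of_notMem hBnotO, hcard]
      · rw [hblk]
        exact Finset.mem_insert_self _ _
    · rintro ⟨⟨Q, O⟩, B⟩ hq
      dsimp only
      rw [Finset.mem_sigma, mem_ppSet] at hq
      obtain ⟨⟨hPPm, hcard⟩, hBO⟩ := hq
      have hBQ : B ∈ Q := hPPm.2.2.2.2 hBO
      have hγB : γ ∉ B := not_mem_block hPPm hγ hBQ
      rw [Finset.mem_filter, mem_ppSet]
      refine ⟨⟨isPP_extend hPPm hγ hBO (Or.inr rfl), ?_⟩,
        insert γ B, Finset.mem_insert_self _ _, Finset.mem_insert_self _ _, ?_, ?_⟩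
      · rw [Finset.card_erase_of_mem hBO, hcard]
        omega
      · intro hc
        obtain ⟨b, hb⟩ := hPPm.1 B hBQ
        have hbγ : b ≠ γ := fun hbc => hγB (hbc ▸ hb)
        have : b ∈ ({γ} : Finset (Fin n)) := hc ▸ Finset.mem_insert_of_mem hb
        exact hbγ (Finset.mem_singleton.mp this)
      · intro hc
        exact not_mem_block hPPm hγ (hPPm.2.2.2.2 (Finset.mem_of_mem_erase hc))
          (Finset.mem_insert_self _ _)
    · intro p hp
      dsimp only
      rw [Finset.mem_filter, mem_ppSet] at hp
      obtain ⟨⟨hPP', hcard⟩, B', hB'Q, hγB', hBne', hB'O⟩ := hp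
      have hblk : blockOf p.1 γ = B' := blockOf_eq hPP'.2.2.2.1 hB'Q hγB'
      have hfacts := unextend_facts hPP' hγ hB'Q hγB' hBne'
      have hBnotO : B'.erase γ ∉ p.2 := by
        intro hc
        refine hfacts.2.1 (Finset.mem_erase.mpr ⟨?_, hPP'.2.2.2.2 hc⟩)
        intro hBB
        exact (hBB ▸ Finset.notMem_erase γ B') hγB'
      simp only [hblk]
      refine Prod.ext ?_ ?_
      · show insert (insert γ (B'.erase γ))
          ((insert (B'.erase γ) (p.1.erase B')).erase (B'.erase γ)) = p.1
        rw [Finset.erase_insert hfacts.2.1, Finset.insert_erase hγB',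
          Finset.insert_erase hB'Q]
      · show (insert (B'.erase γ) p.2).erase (B'.erase γ) = p.2
        rw [Finset.erase_insert hBnotO]
    · rintro ⟨⟨Q, O⟩, B⟩ hq
      dsimp only
      rw [Finset.mem_sigma, mem_ppSet] at hq
      obtain ⟨⟨hPPm, hcard⟩, hBO⟩ := hq
      have hBQ : B ∈ Q := hPPm.2.2.2.2 hBO
      have hγB : γ ∉ B := not_mem_block hPPm hγ hBQ
      have hext := isPP_extend hPPm hγ hBO (Or.inr rfl)
      have hblk : blockOf (insert (insert γ B) (Q.erase B)) γ = insert γ B :=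
        blockOf_eq hext.2.2.2.1 (Finset.mem_insert_self _ _) (Finset.mem_insert_self _ _)
      have hQnot : insert γ B ∉ Q.erase B := fun hc =>
        not_mem_block hPPm hγ (Finset.mem_of_mem_erase hc) (Finset.mem_insert_self _ _)
      simp only [hblk, Finset.erase_insert hγB]
      refine Sigma.ext ?_ (heq_of_eq ?_)
      · refine Prod.ext ?_ ?_
        · show insert B ((insert (insert γ B) (Q.erase B)).erase (insert γ B)) = Q
          rw [Finset.erase_insert hQnot, Finset.insert_erase hBQ]
        · show insert B (O.erase B) = O
          rw [Finset.insert_erase hBO]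
      · rfl
    · intro p hp
      dsimp only
      rw [Finset.mem_filter, mem_ppSet] at hp
      obtain ⟨⟨hPP', hcard⟩, B', hB'Q, hγB', hBne', hB'O⟩ := hp
      have hblk : blockOf p.1 γ = B' := blockOf_eq hPP'.2.2.2.1 hB'Q hγB'
      have hfacts := unextend_facts hPP' hγ hB'Q hγB' hBne'
      have hBne : (B'.erase γ).Nonempty := hfacts.1.1
      have hBnotO : B'.erase γ ∉ p.2 := by
        intro hc
        refine hfacts.2.1 (Finset.mem_erase.mpr ⟨?_, hPP'.2.2.2.2 hc⟩)
        intro hBB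
        exact (hBB ▸ Finset.notMem_erase γ B') hγB'
      have hPPm : isPP m (insert (B'.erase γ) (p.1.erase B'))
          (insert (B'.erase γ) p.2) :=
        isPP_unextend hPP' hγ hB'Q hγB' hBne' (Or.inr ⟨hB'O, rfl⟩)
      have h := pwt_extend x y v hPPm hγ (Finset.mem_insert_self _ _)
        (Finset.max'_mem _ hBne) (fun j hj => Finset.le_max' _ j hj) (Or.inr rfl)
      rw [Finset.erase_insert hfacts.2.1, Finset.erase_insert hBnotO,
        Finset.insert_erase hγB', Finset.insert_erase hB'Q] at h
      simp only [hblk]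
      exact h
  rw [key, Finset.sum_sigma, PPsum, Finset.mul_sum]
  refine Finset.sum_congr rfl fun p hp => ?_
  dsimp only
  rw [← Finset.sum_mul]
  rw [mem_ppSet] at hp
  obtain ⟨hPPm, hcard⟩ := hp
  have hsum := sum_wgt y v (O := p.2)
    (fun B hB => hPPm.1 B (hPPm.2.2.2.2 hB))
    (fun B hB C hC i hiB hiC =>
      hPPm.2.2.2.1 B (hPPm.2.2.2.2 hB) C (hPPm.2.2.2.2 hC) i hiB hiC)
    (Finset.card_pos.mp (by omega))
  rw [hsum, hcard]
  norm_num

open Classical in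
lemma ppSet_split (x y v : R) {m : ℕ} {γ : Fin n} (hγ : (γ : ℕ) = m) (h' : ℕ) :
    PPsum x y v n (m + 1) h' =
      (∑ p ∈ (ppSet n (m + 1) h').filter (fun p => {γ} ∈ p.1 ∧ {γ} ∉ p.2),
        pwt x y v p.1 p.2) +
      (∑ p ∈ (ppSet n (m + 1) h').filter (fun p => {γ} ∈ p.2), pwt x y v p.1 p.2) +
      (∑ p ∈ (ppSet n (m + 1) h').filter (fun p => ∃ B ∈ p.2, γ ∈ B ∧ B ≠ {γ}),
        pwt x y v p.1 p.2) +
      (∑ p ∈ (ppSet n (m + 1) h').filter (fun p => ∃ B ∈ p.1, γ ∈ B ∧ B ≠ {γ} ∧ B ∉ p.2),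
        pwt x y v p.1 p.2) := by
  set S := ppSet n (m + 1) h' with hS
  have huniq : ∀ p ∈ S, ∀ B ∈ p.1, ∀ C ∈ p.1, ∀ i : Fin n, i ∈ B → i ∈ C → B = C :=
    fun p hp => (mem_ppSet.mp hp).1.2.2.2.1
  have hsubO : ∀ p ∈ S, p.2 ⊆ p.1 := fun p hp => (mem_ppSet.mp hp).1.2.2.2.2
  have e1 := (Finset.sum_filter_add_sum_filter_not S
    (fun p => {γ} ∈ p.1 ∧ {γ} ∉ p.2) (fun p => pwt x y v p.1 p.2)).symm
  rw [PPsum, ← hS, e1]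
  have e2 := (Finset.sum_filter_add_sum_filter_not
    (S.filter (fun p => ¬({γ} ∈ p.1 ∧ {γ} ∉ p.2)))
    (fun p => {γ} ∈ p.2) (fun p => pwt x y v p.1 p.2)).symm
  rw [e2]
  have hBiff : (S.filter (fun p => ¬({γ} ∈ p.1 ∧ {γ} ∉ p.2))).filter (fun p => {γ} ∈ p.2)
      = S.filter (fun p => {γ} ∈ p.2) := by
    rw [Finset.filter_filter]
    refine Finset.filter_congr fun p hp => ?_
    constructor
    · exact fun h => h.2
    · exact fun h => ⟨fun hA => hA.2 h, h⟩
  rw [hBiff]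
  have e3 := (Finset.sum_filter_add_sum_filter_not
    ((S.filter (fun p => ¬({γ} ∈ p.1 ∧ {γ} ∉ p.2))).filter (fun p => ¬ {γ} ∈ p.2))
    (fun p => ∃ B ∈ p.2, γ ∈ B ∧ B ≠ {γ}) (fun p => pwt x y v p.1 p.2)).symm
  rw [e3]
  have hC1iff : (((S.filter (fun p => ¬({γ} ∈ p.1 ∧ {γ} ∉ p.2))).filter
        (fun p => ¬ {γ} ∈ p.2)).filter (fun p => ∃ B ∈ p.2, γ ∈ B ∧ B ≠ {γ}))
      = S.filter (fun p => ∃ B ∈ p.2, γ ∈ B ∧ B ≠ {γ}) := by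
    rw [Finset.filter_filter, Finset.filter_filter]
    refine Finset.filter_congr fun p hp => ?_
    constructor
    · exact fun h => h.2.2
    · rintro ⟨B, hBO, hγB, hBne⟩
      have hBQ : B ∈ p.1 := hsubO p hp hBO
      refine ⟨?_, ?_, B, hBO, hγB, hBne⟩
      · rintro ⟨hsQ, -⟩
        exact hBne (huniq p hp B hBQ {γ} hsQ γ hγB (Finset.mem_singleton_self γ))
      · intro hsO
        exact hBne (huniq p hp B hBQ {γ} (hsubO p hp hsO) γ hγB (Finset.mem_singleton_self γ))
  rw [hC1iff]
  have hC2iff : (((S.filter (fun p => ¬({γ} ∈ p.1 ∧ {γ} ∉ p.2))).filter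
        (fun p => ¬ {γ} ∈ p.2)).filter (fun p => ¬ ∃ B ∈ p.2, γ ∈ B ∧ B ≠ {γ}))
      = S.filter (fun p => ∃ B ∈ p.1, γ ∈ B ∧ B ≠ {γ} ∧ B ∉ p.2) := by
    rw [Finset.filter_filter, Finset.filter_filter]
    refine Finset.filter_congr fun p hp => ?_
    have hPP' := (mem_ppSet.mp hp).1
    constructor
    · rintro ⟨hnA, hnB, hnC1⟩
      obtain ⟨B, hBQ, hγB⟩ := hPP'.2.2.1 γ (by omega)
      by_cases hBs : B = {γ}
      · exfalso
        by_cases hsO : {γ} ∈ p.2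
        · exact hnB hsO
        · exact hnA ⟨hBs ▸ hBQ, hsO⟩
      · by_cases hBO : B ∈ p.2
        · exact absurd ⟨B, hBO, hγB, hBs⟩ hnC1
        · exact ⟨B, hBQ, hγB, hBs, hBO⟩
    · rintro ⟨B, hBQ, hγB, hBne, hBO⟩
      refine ⟨?_, ?_, ?_⟩
      · rintro ⟨hsQ, -⟩
        exact hBne (hPP'.2.2.2.1 B hBQ {γ} hsQ γ hγB (Finset.mem_singleton_self γ))
      · intro hsO
        exact hBne (hPP'.2.2.2.1 B hBQ {γ} (hPP'.2.2.2.2 hsO) γ hγB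
          (Finset.mem_singleton_self γ))
      · rintro ⟨C, hCO, hγC, hCne⟩
        exact hBO ((hPP'.2.2.2.1 C (hPP'.2.2.2.2 hCO) B hBQ γ hγC hγB) ▸ hCO)
  rw [hC2iff]
  ring

lemma PPsum_succ_zero (x y v : R) {m : ℕ} (hm : m < n) :
    PPsum x y v n (m + 1) 0 = x * PPsum x y v n m 0 + y * PPsum x y v n m 1 := by
  have hγ : ((⟨m, hm⟩ : Fin n) : ℕ) = m := rfl
  rw [ppSet_split x y v hγ 0, sumA x y v hγ 0, sumB_empty x y v hγ, sumC1_empty x y v hγ,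
    sumC2 x y v hγ 0]
  push_cast
  ring

lemma PPsum_succ (x y v : R) {m : ℕ} (hm : m < n) (h : ℕ) :
    PPsum x y v n (m + 1) (h + 1) =
      x * PPsum x y v n m (h + 1) + x * PPsum x y v n m h +
        (y + (h : R) * v) * PPsum x y v n m (h + 1) +
        (y + ((h : R) + 1) * v) * PPsum x y v n m (h + 2) := by
  have hγ : ((⟨m, hm⟩ : Fin n) : ℕ) = m := rfl
  rw [ppSet_split x y v hγ (h + 1), sumA x y v hγ (h + 1), sumB x y v hγ h,
    sumC1 x y v hγ h, sumC2 x y v hγ (h + 1)]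
  push_cast
  ring

/-! ### Glue -/

lemma PPsum_eq_Dyk (x y v : R) (m : ℕ) (hm : m ≤ n) (h : ℕ) :
    PPsum x y v n m h =
      x ^ h * Dyk (fun k => if k % 2 = 1 then x else y + ((k / 2 - 1 : ℕ) : R) * v)
        (2 * m) ((2 * h : ℕ) : ℤ) := by
  set α : ℕ → R := fun k => if k % 2 = 1 then x else y + ((k / 2 - 1 : ℕ) : R) * v with hα
  have hαodd : ∀ k : ℕ, α (2 * k + 1) = x := by
    intro k; simp only [hα]; rw [if_pos (by omega)]
  have hαeven : ∀ k : ℕ, α (2 * k + 2) = y + (k : R) * v := by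
    intro k; simp only [hα]
    rw [if_neg (by omega), show (2 * k + 2) / 2 - 1 = k by omega]
  induction m generalizing h with
  | zero =>
    rw [PPsum_zero, Dyk_zero]
    by_cases hh : h = 0
    · subst hh; simp
    · rw [if_neg hh, if_neg (by exact_mod_cast fun hc => hh (by omega)), mul_zero]
  | succ m ih =>
    have hmn : m < n := hm
    have hm' : m ≤ n := le_of_lt hm
    have e2 : (2 : ℕ) * (m + 1) = (2 * m + 1) + 1 := by ring
    cases h with
    | zero =>
      rw [PPsum_succ_zero x y v hmn, ih hm' 0, ih hm' 1]
      have a1 : α 1 = x := by simpa using hαodd 0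
      have a2 : α 2 = y := by simpa using hαeven 0
      have c0 : ((2 * 0 : ℕ) : ℤ) = 0 := by norm_num
      have c1 : ((2 * 1 : ℕ) : ℤ) = 2 := by norm_num
      rw [c0, c1, e2]
      have d1 : Dyk α (2 * m + 1 + 1) (0 : ℤ)
          = Dyk α (2 * m + 1) (-1) + α 1 * Dyk α (2 * m + 1) 1 := by
        have hrec := Dyk_succ α (2 * m + 1) (k := 0) (le_refl 0)
        rw [show (0 : ℤ) - 1 = -1 by ring] at hrec
        rw [show (0 : ℤ) + 1 = 1 by ring] at hrec
        rw [show (1 : ℤ).toNat = 1 by omega] at hrec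
        exact hrec
      have d2 : Dyk α (2 * m + 1) (1 : ℤ)
          = Dyk α (2 * m) 0 + α 2 * Dyk α (2 * m) 2 := by
        have hrec := Dyk_succ α (2 * m) (k := 1) (by omega)
        rw [show (1 : ℤ) - 1 = 0 by ring] at hrec
        rw [show (1 : ℤ) + 1 = 2 by ring] at hrec
        rw [show (2 : ℤ).toNat = 2 by omega] at hrec
        exact hrec
      rw [d1, d2, Dyk_neg α _ (by norm_num : (-1 : ℤ) < 0), a1, a2]
      ring
    | succ h =>
      rw [PPsum_succ x y v hmn h, ih hm' (h + 1), ih hm' h, ih hm' (h + 2)]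
      set K : ℤ := ((2 * h : ℕ) : ℤ) with hK
      have eK1 : ((2 * (h + 1) : ℕ) : ℤ) = K + 2 := by rw [hK]; push_cast; ring
      have eK2 : ((2 * (h + 2) : ℕ) : ℤ) = K + 4 := by rw [hK]; push_cast; ring
      have hK0 : (0 : ℤ) ≤ K := by rw [hK]; positivity
      have a2 : α (2 * h + 2) = y + (h : R) * v := hαeven h
      have a3 : α (2 * h + 3) = x := by
        have := hαodd (h + 1); rwa [show 2 * (h + 1) + 1 = 2 * h + 3 by ring] at this
      have a4 : α (2 * h + 4) = y + ((h : R) + 1) * v := by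
        have := hαeven (h + 1)
        rw [show 2 * (h + 1) + 2 = 2 * h + 4 by ring] at this
        rw [this]; push_cast; ring
      have d2 : Dyk α (2 * m + 1) (K + 1)
          = Dyk α (2 * m) K + α (2 * h + 2) * Dyk α (2 * m) (K + 2) := by
        have hrec := Dyk_succ α (2 * m) (k := K + 1) (by omega)
        rw [show K + 1 - 1 = K by ring] at hrec
        rw [show K + 1 + 1 = K + 2 by ring] at hrec
        rw [show (K + 2).toNat = 2 * h + 2 by omega] at hrec
        exact hrec
      have d3 : Dyk α (2 * m + 1) (K + 3)
          = Dyk α (2 * m) (K + 2) + α (2 * h + 4) * Dyk α (2 * m) (K + 4) := by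
        have hrec := Dyk_succ α (2 * m) (k := K + 3) (by omega)
        rw [show K + 3 - 1 = K + 2 by ring] at hrec
        rw [show K + 3 + 1 = K + 4 by ring] at hrec
        rw [show (K + 4).toNat = 2 * h + 4 by omega] at hrec
        exact hrec
      have d1 : Dyk α (2 * m + 1 + 1) (K + 2)
          = Dyk α (2 * m + 1) (K + 1) + α (2 * h + 3) * Dyk α (2 * m + 1) (K + 3) := by
        have hrec := Dyk_succ α (2 * m + 1) (k := K + 2) (by omega)
        rw [show K + 2 - 1 = K + 1 by ring] at hrec
        rw [show K + 2 + 1 = K + 3 by ring] at hrec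
        rw [show (K + 3).toNat = 2 * h + 3 by omega] at hrec
        exact hrec
      rw [eK1, eK2, e2, d1, d2, d3, a2, a3, a4]
      ring

theorem statement13' {R' : Type*} [CommRing R'] (x y v : R') (n : ℕ) :
    (∑ P ∈ setPartitions n,
        x ^ P.card * y ^ perecP P * v ^ (n - P.card - perecP P)) =
      ∑ ω ∈ dyckPaths (2 * n),
        sweight (fun h =>
          if h % 2 = 1 then x else y + ((h / 2 - 1 : ℕ) : R') * v) ω := by
  rw [← PPsum_last, rhs_eq_Dyk, PPsum_eq_Dyk x y v n (le_refl n) 0]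
  norm_num

end Statement13Aux

open Classical in
/-- S-fraction for set partitions, Theorem 3.1 of Sokal–Zeng. -/
theorem statement13 {R : Type*} [CommRing R] (x y v : R) (n : ℕ) :
    (∑ P ∈ setPartitions n,
        x ^ P.card * y ^ perecP P * v ^ (n - P.card - perecP P)) =
      ∑ ω ∈ dyckPaths (2 * n),
        sweight (fun h =>
          if h % 2 = 1 then x else y + ((h / 2 - 1 : ℕ) : R) * v) ω := by
  exact statement13' x y v n

end Paper
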